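/- arXiv:1611.04712 — 7 statements merged into one kernel-verified Lean document; each statement's English description precedes it below -/
import Mathlib

section
/- For every positive integer d there exists n₀ such that for every n ≥ n₀ there is a finite graph G on exactly n·(1 + ⌈√d⌉) + d vertices with minimum degree d which contains no S_ℓ-factor for any integer ℓ ≥ ⌈√d⌉ + 2. -/
/-- `P` is an `S_ℓ`-packing in `G`: a finite collection of pairwise vertex-disjoint
stars (given as a pair (centre, set of leaves)), each of size at least `ℓ`. -/
def IsStarPacking {V : Type*} (G : SimpleGraph V) (ℓ : ℕ)
    (P : Finset (V × Finset V)) : Prop :=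
  (∀ p ∈ P, ℓ ≤ p.2.card ∧ p.1 ∉ p.2 ∧ ∀ x ∈ p.2, G.Adj p.1 x) ∧
  ∀ p ∈ P, ∀ q ∈ P, p ≠ q →
    Disjoint (insert p.1 (↑p.2 : Set V)) (insert q.1 (↑q.2 : Set V))

/-- The packing `P` covers the vertex set `U`. -/
def PackingCovers {V : Type*} (P : Finset (V × Finset V)) (U : Set V) : Prop :=
  ∀ v ∈ U, ∃ p ∈ P, v = p.1 ∨ v ∈ p.2

abbrev Vt (d s n : ℕ) : Type := Fin d ⊕ (Fin n ⊕ (Fin n × Fin s))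

def Rl (d s n : ℕ) (u v : Vt d s n) : Prop :=
  (∃ a y, u = Sum.inl a ∧ v = Sum.inr (Sum.inr y)) ∨
  (∃ i, ∃ y : Fin n × Fin s, u = Sum.inr (Sum.inl i) ∧ v = Sum.inr (Sum.inr y) ∧
    ∃ k, k < d ∧ k % s = y.2.val ∧ (i.val + k / s) % n = y.1.val)

def Gr (d s n : ℕ) : SimpleGraph (Vt d s n) := SimpleGraph.fromRel (Rl d s n)

lemma adj_cases {d s n : ℕ} {u v : Vt d s n} (h : (Gr d s n).Adj u v) :
    Rl d s n u v ∨ Rl d s n v u := ((SimpleGraph.fromRel_adj _ _ _).1 h).2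

lemma adj_x_right {d s n : ℕ} {i : Fin n} {v : Vt d s n}
    (h : (Gr d s n).Adj (Sum.inr (Sum.inl i)) v) :
    ∃ y : Fin n × Fin s, v = Sum.inr (Sum.inr y) ∧
      ∃ k, k < d ∧ k % s = y.2.val ∧ (i.val + k / s) % n = y.1.val := by
  rcases adj_cases h with h | h
  · rcases h with ⟨a, y, hu, hv⟩ | ⟨i', y, hu, hv, hk⟩
    · simp at hu
    · refine ⟨y, hv, ?_⟩
      have : i' = i := by simpa [Sum.inr.injEq, Sum.inl.injEq] using hu.symm
      simpa [this] using hk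
  · rcases h with ⟨a, y, hu, hv⟩ | ⟨i', y, hu, hv, hk⟩ <;> simp at hv

lemma adj_y_right {d s n : ℕ} {y : Fin n × Fin s} {v : Vt d s n}
    (h : (Gr d s n).Adj (Sum.inr (Sum.inr y)) v) :
    (∃ a : Fin d, v = Sum.inl a) ∨
    (∃ i : Fin n, v = Sum.inr (Sum.inl i) ∧
      ∃ k, k < d ∧ k % s = y.2.val ∧ (i.val + k / s) % n = y.1.val) := by
  rcases adj_cases h with h | h
  · rcases h with ⟨a, y', hu, hv⟩ | ⟨i', y', hu, hv, hk⟩ <;> simp at hu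
  · rcases h with ⟨a, y', hv, hu⟩ | ⟨i', y', hv, hu, hk⟩
    · exact Or.inl ⟨a, hv⟩
    · refine Or.inr ⟨i', hv, ?_⟩
      have : y' = y := by simpa using hu.symm
      simpa [this] using hk

lemma adj_to_x {d s n : ℕ} {i : Fin n} {u : Vt d s n}
    (h : (Gr d s n).Adj u (Sum.inr (Sum.inl i))) :
    ∃ y : Fin n × Fin s, u = Sum.inr (Sum.inr y) := by
  rcases adj_cases h with h | h
  · rcases h with ⟨a, y, hu, hv⟩ | ⟨i', y, hu, hv, hk⟩ <;> simp at hv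
  · rcases h with ⟨a, y, hv, hu⟩ | ⟨i', y, hv, hu, hk⟩
    · simp at hv
    · exact ⟨y, hu⟩

lemma adj_a_right {d s n : ℕ} {a : Fin d} {v : Vt d s n}
    (h : (Gr d s n).Adj (Sum.inl a) v) :
    ∃ y : Fin n × Fin s, v = Sum.inr (Sum.inr y) := by
  rcases adj_cases h with h | h
  · rcases h with ⟨a', y, hu, hv⟩ | ⟨i', y, hu, hv, hk⟩
    · exact ⟨y, hv⟩
    · simp at hu
  · rcases h with ⟨a', y, hv, hu⟩ | ⟨i', y, hv, hu, hk⟩ <;> simp at hu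

lemma deg_x {d s n : ℕ} (hs : 1 ≤ s) (hds : d ≤ s * s) (hsn : s ≤ n) (i : Fin n) :
    ((Gr d s n).neighborSet (Sum.inr (Sum.inl i))).ncard = d := by
  have hn0 : 0 < n := lt_of_lt_of_le hs hsn
  have hs0 : 0 < s := hs
  set f : Fin d → Vt d s n := fun k =>
    Sum.inr (Sum.inr (⟨(i.val + k.val / s) % n, Nat.mod_lt _ hn0⟩, ⟨k.val % s, Nat.mod_lt _ hs0⟩))
    with hf
  have hset : (Gr d s n).neighborSet (Sum.inr (Sum.inl i)) = Set.range f := by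
    ext v
    constructor
    · intro hv
      rcases adj_x_right hv with ⟨y, rfl, k, hk, hk1, hk2⟩
      exact ⟨⟨k, hk⟩, by simp [hf, Fin.ext_iff, hk1, hk2]⟩
    · rintro ⟨k, rfl⟩
      have hne : (Sum.inr (Sum.inl i) : Vt d s n) ≠ f k := by simp [hf]
      refine (SimpleGraph.fromRel_adj _ _ _).2 ⟨hne, Or.inl ?_⟩
      exact Or.inr ⟨i, _, rfl, rfl, k.val, k.2, rfl, rfl⟩
  rw [hset, ← Set.image_univ, Set.ncard_image_of_injective _ ?_, Set.ncard_univ,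
    Nat.card_eq_fintype_card, Fintype.card_fin]
  intro k1 k2 h
  simp only [hf, Sum.inr.injEq, Prod.mk.injEq, Fin.mk.injEq] at h
  obtain ⟨h1, h2⟩ := h
  have hq1 : k1.val / s < s := (Nat.div_lt_iff_lt_mul hs0).2 (lt_of_lt_of_le k1.2 hds)
  have hq2 : k2.val / s < s := (Nat.div_lt_iff_lt_mul hs0).2 (lt_of_lt_of_le k2.2 hds)
  have hdiv : k1.val / s = k2.val / s := by
    have hm : k1.val / s ≡ k2.val / s [MOD n] := Nat.ModEq.add_left_cancel' i.val h1
    rwa [Nat.ModEq, Nat.mod_eq_of_lt (lt_of_lt_of_le hq1 hsn),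
      Nat.mod_eq_of_lt (lt_of_lt_of_le hq2 hsn)] at hm
  have e1 := Nat.div_add_mod k1.val s
  rw [hdiv] at e1
  have e2 := Nat.div_add_mod k2.val s
  exact Fin.ext (by omega)

lemma deg_a {d s n : ℕ} (hs : 1 ≤ s) (hdn : d ≤ n) (a : Fin d) :
    d ≤ ((Gr d s n).neighborSet (Sum.inl a)).ncard := by
  set g : Fin d → Vt d s n := fun k =>
    Sum.inr (Sum.inr (⟨k.val, lt_of_lt_of_le k.2 hdn⟩, ⟨0, hs⟩)) with hg
  have hsub : Set.range g ⊆ (Gr d s n).neighborSet (Sum.inl a) := by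
    rintro _ ⟨k, rfl⟩
    refine (SimpleGraph.fromRel_adj _ _ _).2 ⟨by simp [hg], Or.inl (Or.inl ⟨a, _, rfl, rfl⟩)⟩
  calc d = (Set.range g).ncard := by
        rw [← Set.image_univ, Set.ncard_image_of_injective _ ?_, Set.ncard_univ,
          Nat.card_eq_fintype_card, Fintype.card_fin]
        intro k1 k2 h
        simp only [hg, Sum.inr.injEq, Prod.mk.injEq, Fin.mk.injEq] at h
        exact Fin.ext h.1
    _ ≤ _ := Set.ncard_le_ncard hsub (Set.toFinite _)

lemma deg_y {d s n : ℕ} (y : Fin n × Fin s) :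
    d ≤ ((Gr d s n).neighborSet (Sum.inr (Sum.inr y))).ncard := by
  set g : Fin d → Vt d s n := fun k => Sum.inl k with hg
  have hsub : Set.range g ⊆ (Gr d s n).neighborSet (Sum.inr (Sum.inr y)) := by
    rintro _ ⟨k, rfl⟩
    refine (SimpleGraph.fromRel_adj _ _ _).2 ⟨by simp [hg], Or.inr (Or.inl ⟨k, y, rfl, rfl⟩)⟩
  calc d = (Set.range g).ncard := by
        rw [← Set.image_univ, Set.ncard_image_of_injective _ (fun k1 k2 h => by
          simpa [hg, Fin.ext_iff, Sum.inl.injEq] using h), Set.ncard_univ,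
          Nat.card_eq_fintype_card, Fintype.card_fin]
    _ ≤ _ := Set.ncard_le_ncard hsub (Set.toFinite _)

lemma no_factor (d s n ℓ : ℕ) (hs : 1 ≤ s) (hds : d ≤ s * s) (hsn : s ≤ n)
    (hbig : (s+2)*s*d < 4*n) (hl : s + 2 ≤ ℓ) :
    ¬ ∃ P : Finset (Vt d s n × Finset (Vt d s n)),
      IsStarPacking (Gr d s n) ℓ P ∧ PackingCovers P Set.univ := by
  classical
  rintro ⟨P, ⟨hstar, hdisj⟩, hcov⟩
  have hn0 : 0 < n := lt_of_lt_of_le hs hsn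
  let Sp : Vt d s n × Finset (Vt d s n) → Finset (Vt d s n) := fun p => insert p.1 p.2
  have hSdisj : ∀ p ∈ P, ∀ q ∈ P, p ≠ q → Disjoint (Sp p) (Sp q) := by
    intro p hp q hq hpq
    rw [← Finset.disjoint_coe]
    simpa [Sp] using hdisj p hp q hq hpq
  let XF : Finset (Vt d s n) := Finset.univ.image (fun i : Fin n => Sum.inr (Sum.inl i))
  let YF : Finset (Vt d s n) := Finset.univ.image (fun y : Fin n × Fin s => Sum.inr (Sum.inr y))
  let AF : Finset (Vt d s n) := Finset.univ.image (fun a : Fin d => Sum.inl a)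
  have hXmem : ∀ v : Vt d s n, v ∈ XF ↔ ∃ i : Fin n, v = Sum.inr (Sum.inl i) := by
    intro v; simp [XF, eq_comm]
  have hYmem : ∀ v : Vt d s n, v ∈ YF ↔ ∃ y : Fin n × Fin s, v = Sum.inr (Sum.inr y) := by
    intro v; simp [YF, eq_comm]
  have hAmem : ∀ v : Vt d s n, v ∈ AF ↔ ∃ a : Fin d, v = Sum.inl a := by
    intro v; simp [AF, eq_comm]
  have hXcard : XF.card = n := by
    rw [Finset.card_image_of_injective _ (fun a b h => by simpa using h)]; simp
  have hYcard : YF.card = n * s := by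
    rw [Finset.card_image_of_injective _ (fun a b h => by simpa using h)]; simp
  have hAcard : AF.card = d := by
    rw [Finset.card_image_of_injective _ (fun a b h => by simpa using h)]; simp
  let PX := P.filter (fun p => ∃ i : Fin n, p.1 = Sum.inr (Sum.inl i))
  let PY := P.filter (fun p => ∃ y : Fin n × Fin s, p.1 = Sum.inr (Sum.inr y))
  have hPXP : PX ⊆ P := Finset.filter_subset _ _
  have hPYP : PY ⊆ P := Finset.filter_subset _ _
  -- leaves of X-centred stars lie in Y
  have hPXleaf : ∀ p ∈ PX, p.2 ⊆ YF := by
    intro p hp v hv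
    obtain ⟨i, hi⟩ := (Finset.mem_filter.1 hp).2
    have hadj := (hstar p (hPXP hp)).2.2 v hv
    rw [hi] at hadj
    obtain ⟨y, hy, -⟩ := adj_x_right hadj
    exact (hYmem v).2 ⟨y, hy⟩
  -- leaves of Y-centred stars lie in A ∪ X
  have hPYleaf : ∀ p ∈ PY, p.2 ⊆ AF ∪ XF := by
    intro p hp v hv
    obtain ⟨y, hy⟩ := (Finset.mem_filter.1 hp).2
    have hadj := (hstar p (hPYP hp)).2.2 v hv
    rw [hy] at hadj
    rcases adj_y_right hadj with ⟨a, ha⟩ | ⟨i, hi, -⟩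
    · exact Finset.mem_union_left _ ((hAmem v).2 ⟨a, ha⟩)
    · exact Finset.mem_union_right _ ((hXmem v).2 ⟨i, hi⟩)
  -- a Y-centred star has at most s leaves in X
  have hPYX : ∀ p ∈ PY, (p.2 ∩ XF).card ≤ s := by
    intro p hp
    obtain ⟨y, hy⟩ := (Finset.mem_filter.1 hp).2
    let F : Vt d s n → ℕ := fun v =>
      match v with
      | Sum.inr (Sum.inl i) =>
          if h : ∃ k, k < d ∧ k % s = y.2.val ∧ (i.val + k / s) % n = y.1.val
          then h.choose / s else 0
      | _ => 0
    have key : ∀ v ∈ p.2 ∩ XF, ∃ i : Fin n,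
        v = Sum.inr (Sum.inl i) ∧
        ∃ h : ∃ k, k < d ∧ k % s = y.2.val ∧ (i.val + k / s) % n = y.1.val,
          F v = h.choose / s := by
      intro v hv
      obtain ⟨i, hi⟩ := (hXmem v).1 (Finset.mem_of_mem_inter_right hv)
      have hadj := (hstar p (hPYP hp)).2.2 v (Finset.mem_of_mem_inter_left hv)
      rw [hy, hi] at hadj
      rcases adj_y_right hadj with ⟨a, ha⟩ | ⟨i2, hi2, hk⟩
      · simp at ha
      · have hii : i2 = i := by simpa using hi2.symm
        rw [hii] at hk
        refine ⟨i, hi, hk, ?_⟩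
        rw [hi]
        simp only [F]
        rw [dif_pos hk]
    have : (p.2 ∩ XF).card ≤ (Finset.range s).card := by
      apply Finset.card_le_card_of_injOn F
      · intro v hv
        obtain ⟨i, hi, hex, hFv⟩ := key v hv
        obtain ⟨hk1, -, -⟩ := hex.choose_spec
        rw [hFv]
        exact Finset.mem_range.2 ((Nat.div_lt_iff_lt_mul hs).2 (lt_of_lt_of_le hk1 hds))
      · intro v1 hv1 v2 hv2 hF
        obtain ⟨i1, hi1, hex1, hFv1⟩ := key v1 hv1
        obtain ⟨i2, hi2, hex2, hFv2⟩ := key v2 hv2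
        obtain ⟨ha1, -, hb1⟩ := hex1.choose_spec
        obtain ⟨ha2, -, hb2⟩ := hex2.choose_spec
        rw [hFv1, hFv2] at hF
        have hq1 : hex1.choose / s < s := (Nat.div_lt_iff_lt_mul hs).2 (lt_of_lt_of_le ha1 hds)
        have hmm : (i1.val + hex1.choose / s) % n = (i2.val + hex2.choose / s) % n := by
          rw [hb1, hb2]
        rw [hF] at hmm
        have hi12 : i1 = i2 := by
          have hm : i1.val ≡ i2.val [MOD n] := Nat.ModEq.add_right_cancel' _ hmm
          exact Fin.ext (by
            rwa [Nat.ModEq, Nat.mod_eq_of_lt i1.2, Nat.mod_eq_of_lt i2.2] at hm)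
        rw [hi1, hi2, hi12]
    simpa using this
  -- a Y-centred star has at least 2 leaves in A
  have hPYA : ∀ p ∈ PY, 2 ≤ (p.2 ∩ AF).card := by
    intro p hp
    have h1 : p.2 ⊆ (p.2 ∩ AF) ∪ (p.2 ∩ XF) := by
      intro v hv
      rcases Finset.mem_union.1 (hPYleaf p hp hv) with h | h
      · exact Finset.mem_union_left _ (Finset.mem_inter.2 ⟨hv, h⟩)
      · exact Finset.mem_union_right _ (Finset.mem_inter.2 ⟨hv, h⟩)
    have h2 : ℓ ≤ (p.2 ∩ AF).card + (p.2 ∩ XF).card :=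
      le_trans (le_trans (hstar p (hPYP hp)).1 (Finset.card_le_card h1))
        (Finset.card_union_le _ _)
    have := hPYX p hp
    omega
  -- counting A-vertices: 2 * |PY| ≤ d
  have hC : 2 * PY.card ≤ d := by
    have hdisjY : ∀ p ∈ PY, ∀ q ∈ PY, p ≠ q →
        Disjoint (Sp p ∩ AF) (Sp q ∩ AF) := by
      intro p hp q hq hpq
      exact Finset.disjoint_of_subset_left (Finset.inter_subset_left)
        (Finset.disjoint_of_subset_right (Finset.inter_subset_left)
          (hSdisj p (hPYP hp) q (hPYP hq) hpq))
    have hsum : ∑ p ∈ PY, (Sp p ∩ AF).card ≤ d := by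
      rw [← Finset.card_biUnion hdisjY]
      calc (PY.biUnion fun p => Sp p ∩ AF).card ≤ AF.card :=
            Finset.card_le_card (by
              intro v hv
              obtain ⟨p, -, hvp⟩ := Finset.mem_biUnion.1 hv
              exact Finset.mem_of_mem_inter_right hvp)
        _ = d := hAcard
    calc 2 * PY.card = ∑ _p ∈ PY, 2 := by rw [Finset.sum_const, smul_eq_mul]; ring
      _ ≤ ∑ p ∈ PY, (Sp p ∩ AF).card := Finset.sum_le_sum (fun p hp =>
          le_trans (hPYA p hp) (Finset.card_le_card
            (Finset.inter_subset_inter_right (Finset.subset_insert _ _))))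
      _ ≤ d := hsum
  -- counting Y-vertices: ℓ * |PX| ≤ n * s
  have hD : ℓ * PX.card ≤ n * s := by
    have hdisjX : ∀ p ∈ PX, ∀ q ∈ PX, p ≠ q →
        Disjoint (Sp p ∩ YF) (Sp q ∩ YF) := by
      intro p hp q hq hpq
      exact Finset.disjoint_of_subset_left (Finset.inter_subset_left)
        (Finset.disjoint_of_subset_right (Finset.inter_subset_left)
          (hSdisj p (hPXP hp) q (hPXP hq) hpq))
    have hsum : ∑ p ∈ PX, (Sp p ∩ YF).card ≤ n * s := by
      rw [← Finset.card_biUnion hdisjX]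
      calc (PX.biUnion fun p => Sp p ∩ YF).card ≤ YF.card :=
            Finset.card_le_card (by
              intro v hv
              obtain ⟨p, -, hvp⟩ := Finset.mem_biUnion.1 hv
              exact Finset.mem_of_mem_inter_right hvp)
        _ = n * s := hYcard
    calc ℓ * PX.card = ∑ _p ∈ PX, ℓ := by rw [Finset.sum_const, smul_eq_mul]; ring
      _ ≤ ∑ p ∈ PX, (Sp p ∩ YF).card := Finset.sum_le_sum (fun p hp => by
          have hsub : p.2 ⊆ Sp p ∩ YF := by
            intro v hv
            exact Finset.mem_inter.2 ⟨Finset.mem_insert_of_mem hv, hPXleaf p hp hv⟩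
          exact le_trans (hstar p (hPXP hp)).1 (Finset.card_le_card hsub))
      _ ≤ n * s := hsum
  -- covering X: n ≤ |PX| + |PY| * s
  have hE : n ≤ PX.card + PY.card * s := by
    have hXsub : XF ⊆ (PX ∪ PY).biUnion (fun p => Sp p ∩ XF) := by
      intro v hv
      obtain ⟨i, hi⟩ := (hXmem v).1 hv
      obtain ⟨p, hp, hvp⟩ := hcov v (Set.mem_univ v)
      rcases hvp with hvc | hvl
      · refine Finset.mem_biUnion.2 ⟨p, Finset.mem_union_left _ ?_, ?_⟩
        · exact Finset.mem_filter.2 ⟨hp, ⟨i, hvc ▸ hi⟩⟩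
        · exact Finset.mem_inter.2 ⟨hvc ▸ Finset.mem_insert_self _ _, hv⟩
      · have hadj := (hstar p hp).2.2 v hvl
        rw [hi] at hadj
        obtain ⟨y, hy⟩ := adj_to_x hadj
        refine Finset.mem_biUnion.2 ⟨p, Finset.mem_union_right _ ?_, ?_⟩
        · exact Finset.mem_filter.2 ⟨hp, ⟨y, hy⟩⟩
        · exact Finset.mem_inter.2 ⟨Finset.mem_insert_of_mem hvl, hv⟩
    have h1 : n ≤ ∑ p ∈ PX ∪ PY, (Sp p ∩ XF).card := by
      calc n = XF.card := hXcard.symm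
        _ ≤ ((PX ∪ PY).biUnion (fun p => Sp p ∩ XF)).card := Finset.card_le_card hXsub
        _ ≤ ∑ p ∈ PX ∪ PY, (Sp p ∩ XF).card := Finset.card_biUnion_le
    have hdisjPXY : Disjoint PX PY := by
      rw [Finset.disjoint_left]
      intro p hp hq
      obtain ⟨i, hi⟩ := (Finset.mem_filter.1 hp).2
      obtain ⟨y, hy⟩ := (Finset.mem_filter.1 hq).2
      rw [hi] at hy
      simp at hy
    rw [Finset.sum_union hdisjPXY] at h1
    have h2 : ∑ p ∈ PX, (Sp p ∩ XF).card ≤ PX.card := by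
      calc ∑ p ∈ PX, (Sp p ∩ XF).card ≤ ∑ _p ∈ PX, 1 := Finset.sum_le_sum (fun p hp => by
            have : Sp p ∩ XF ⊆ {p.1} := by
              intro v hv
              obtain ⟨hv1, hv2⟩ := Finset.mem_inter.1 hv
              rcases Finset.mem_insert.1 hv1 with h | h
              · exact Finset.mem_singleton.2 h
              · exfalso
                obtain ⟨y, hy⟩ := (hYmem v).1 (hPXleaf p hp h)
                obtain ⟨i, hi⟩ := (hXmem v).1 hv2
                rw [hy] at hi; simp at hi
            simpa using Finset.card_le_card this)
        _ = PX.card := by simp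
    have h3 : ∑ p ∈ PY, (Sp p ∩ XF).card ≤ PY.card * s := by
      calc ∑ p ∈ PY, (Sp p ∩ XF).card ≤ ∑ _p ∈ PY, s := Finset.sum_le_sum (fun p hp => by
            have hsub : Sp p ∩ XF ⊆ p.2 ∩ XF := by
              intro v hv
              obtain ⟨hv1, hv2⟩ := Finset.mem_inter.1 hv
              rcases Finset.mem_insert.1 hv1 with h | h
              · exfalso
                obtain ⟨y, hy⟩ := (Finset.mem_filter.1 hp).2
                obtain ⟨i, hi⟩ := (hXmem v).1 hv2
                rw [h, hy] at hi; simp at hi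
              · exact Finset.mem_inter.2 ⟨h, hv2⟩
            exact le_trans (Finset.card_le_card hsub) (hPYX p hp))
        _ = PY.card * s := by rw [Finset.sum_const, smul_eq_mul]
    omega
  -- final arithmetic
  have h1 : (s+2) * n ≤ (s+2) * (PX.card + PY.card * s) := Nat.mul_le_mul_left _ hE
  have h2 : (s+2) * PX.card ≤ ℓ * PX.card := Nat.mul_le_mul_right _ hl
  have h3 : (s+2) * s * (2 * PY.card) ≤ (s+2) * s * d := Nat.mul_le_mul_left _ hC
  nlinarith [h1, h2, h3, hD, hbig]

/-- For every `d ≥ 1` and all sufficiently large `n`, there is a graph on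
`n(1 + ⌈√d⌉) + d` vertices with minimum degree (exactly) `d` containing no
`S_ℓ`-factor for any `ℓ ≥ ⌈√d⌉ + 2`. -/
theorem lower_bound_construction (d : ℕ) (hd : 1 ≤ d) :
    ∃ n₀ : ℕ, ∀ n : ℕ, n₀ ≤ n →
      ∃ (V : Type) (_ : Fintype V) (G : SimpleGraph V),
        Nat.card V = n * (1 + ⌈Real.sqrt d⌉₊) + d ∧
        (∀ v : V, d ≤ (G.neighborSet v).ncard) ∧
        (∃ v : V, (G.neighborSet v).ncard = d) ∧
        ∀ ℓ : ℕ, ⌈Real.sqrt d⌉₊ + 2 ≤ ℓ →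
          ¬ ∃ P : Finset (V × Finset V), IsStarPacking G ℓ P ∧ PackingCovers P Set.univ := by
  set s := ⌈Real.sqrt d⌉₊ with hsdef
  have hd0 : (0:ℝ) < (d:ℝ) := by exact_mod_cast hd
  have hs : 1 ≤ s := Nat.ceil_pos.2 (Real.sqrt_pos.2 hd0)
  have hds : d ≤ s * s := by
    have h1 : Real.sqrt d ≤ (s:ℝ) := Nat.le_ceil _
    have h0 : (0:ℝ) ≤ Real.sqrt d := Real.sqrt_nonneg _
    have : (d:ℝ) ≤ (s:ℝ) * (s:ℝ) := by
      calc (d:ℝ) = Real.sqrt d * Real.sqrt d := (Real.mul_self_sqrt hd0.le).symm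
        _ ≤ (s:ℝ) * (s:ℝ) := mul_le_mul h1 h1 h0 (by positivity)
    exact_mod_cast this
  refine ⟨(s+2)*s*d + s + d + 1, fun n hn => ?_⟩
  have hsn : s ≤ n := by omega
  have hdn : d ≤ n := by omega
  have hbig : (s+2)*s*d < 4*n := by omega
  have hn0 : 0 < n := by omega
  refine ⟨Vt d s n, inferInstance, Gr d s n, ?_, ?_, ?_, ?_⟩
  · simp only [Nat.card_eq_fintype_card, Fintype.card_sum, Fintype.card_prod, Fintype.card_fin]
    ring
  · intro v
    rcases v with a | i | y
    · exact deg_a hs hdn a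
    · exact le_of_eq (deg_x hs hds hsn i).symm
    · exact deg_y y
  · exact ⟨Sum.inr (Sum.inl ⟨0, hn0⟩), deg_x hs hds hsn _⟩
  · intro ℓ hl
    exact no_factor d s n ℓ hs hds hsn hbig hl
end

section
/- Let d₁ ≥ d₂ ≥ 1 be integers and let G be a bipartite graph with parts V₁ and V₂ such that deg(v) ≥ d₁ for every v ∈ V₁ and 1 ≤ deg(w) ≤ d₂ for every w ∈ V₂. Then G contains an S_ℓ-factor with ℓ = ⌊d₁/d₂⌋ in which every star has its centre in V₁ and all of its leaves in V₂. -/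
/-- A bipartite graph with parts `V₁, V₂`, minimum degree `d₁` on the `V₁` side and
degrees between `1` and `d₂ ≤ d₁` on the `V₂` side, has an `S_{⌊d₁/d₂⌋}`-factor with
all centres in `V₁` and all leaves in `V₂`. -/
theorem bipartite_star_factor {V : Type*} [Fintype V] [DecidableEq V] (G : SimpleGraph V)
    [DecidableRel G.Adj] (V₁ V₂ : Finset V)
    (hdisj : Disjoint V₁ V₂) (hcover : V₁ ∪ V₂ = Finset.univ)
    (hbip : ∀ v w : V, G.Adj v w → (v ∈ V₁ ∧ w ∈ V₂) ∨ (v ∈ V₂ ∧ w ∈ V₁))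
    (d₁ d₂ : ℕ) (hd₂ : 1 ≤ d₂) (hd₁₂ : d₂ ≤ d₁)
    (hdeg₁ : ∀ v ∈ V₁, d₁ ≤ G.degree v)
    (hdeg₂ : ∀ w ∈ V₂, 1 ≤ G.degree w ∧ G.degree w ≤ d₂) :
    ∃ P : Finset (V × Finset V), IsStarPacking G (d₁ / d₂) P ∧
      PackingCovers P Set.univ ∧ ∀ p ∈ P, p.1 ∈ V₁ ∧ p.2 ⊆ V₂ := by
  classical
  set ℓ := d₁ / d₂ with hℓ
  have hV1not2 : ∀ v ∈ V₁, v ∉ V₂ := fun v hv => Finset.disjoint_left.mp hdisj hv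
  have hnb : ∀ v ∈ V₁, ∀ w, G.Adj v w → w ∈ V₂ := by
    intro v hv w hadj
    rcases hbip v w hadj with ⟨_, h⟩ | ⟨h, _⟩
    · exact h
    · exact absurd h (hV1not2 v hv)
  have hnb2 : ∀ w ∈ V₂, ∀ v, G.Adj w v → v ∈ V₁ := by
    intro w hw v hadj
    rcases hbip w v hadj with ⟨h, _⟩ | ⟨_, h⟩
    · exact absurd hw (hV1not2 w h)
    · exact h
  -- key counting lemma
  have key : ∀ T' : Finset V, T' ⊆ V₁ →
      ℓ * T'.card ≤ (T'.biUnion (fun v => G.neighborFinset v)).card := by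
    intro T' hT'
    set N := T'.biUnion (fun v => G.neighborFinset v) with hN
    have hmemN : ∀ w ∈ N, w ∈ V₂ := by
      intro w hw
      obtain ⟨v, hv, hw⟩ := Finset.mem_biUnion.mp hw
      exact hnb v (hT' hv) w ((G.mem_neighborFinset _ _).mp hw)
    have h1 : d₁ * T'.card ≤ ∑ v ∈ T', G.degree v := by
      calc d₁ * T'.card = ∑ _v ∈ T', d₁ := by
            rw [Finset.sum_const, smul_eq_mul, mul_comm]
        _ ≤ ∑ v ∈ T', G.degree v := Finset.sum_le_sum fun v hv => hdeg₁ v (hT' hv)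
    have h2 : ∑ v ∈ T', G.degree v
        = ∑ w ∈ Finset.univ, (T'.filter (fun v => G.Adj v w)).card := by
      have hdeg : ∀ v, G.degree v = ∑ w ∈ Finset.univ, if G.Adj v w then 1 else 0 := by
        intro v
        rw [← Finset.card_filter,
          show (Finset.filter (fun w => G.Adj v w) Finset.univ) = G.neighborFinset v from
            (SimpleGraph.neighborFinset_eq_filter (G := G) (v := v)).symm]
        rfl
      simp_rw [hdeg, Finset.card_filter]
      exact Finset.sum_comm
    have h3 : ∑ w ∈ Finset.univ, (T'.filter (fun v => G.Adj v w)).card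
        = ∑ w ∈ N, (T'.filter (fun v => G.Adj v w)).card := by
      refine (Finset.sum_subset (Finset.subset_univ N) ?_).symm
      intro w _ hwN
      rw [Finset.card_eq_zero, Finset.filter_eq_empty_iff]
      intro v hv hadj
      exact hwN (Finset.mem_biUnion.mpr ⟨v, hv, (G.mem_neighborFinset _ _).mpr hadj⟩)
    have h4 : ∑ w ∈ N, (T'.filter (fun v => G.Adj v w)).card ≤ d₂ * N.card := by
      calc ∑ w ∈ N, (T'.filter (fun v => G.Adj v w)).card
          ≤ ∑ _w ∈ N, d₂ := by
            refine Finset.sum_le_sum fun w hw => ?_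
            have hsub : T'.filter (fun v => G.Adj v w) ⊆ G.neighborFinset w := by
              intro v hv
              exact (G.mem_neighborFinset _ _).mpr (Finset.mem_filter.mp hv).2.symm
            exact le_trans (Finset.card_le_card hsub) (hdeg₂ w (hmemN w hw)).2
        _ = d₂ * N.card := by rw [Finset.sum_const, smul_eq_mul, mul_comm]
    have hmain : d₁ * T'.card ≤ d₂ * N.card := by
      calc d₁ * T'.card ≤ _ := h1
        _ = _ := h2
        _ = _ := h3
        _ ≤ _ := h4
    have hℓd₂ : ℓ * d₂ ≤ d₁ := Nat.div_mul_le_self d₁ d₂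
    have : d₂ * (ℓ * T'.card) ≤ d₂ * N.card := by
      calc d₂ * (ℓ * T'.card) = (ℓ * d₂) * T'.card := by ring
        _ ≤ d₁ * T'.card := Nat.mul_le_mul_right _ hℓd₂
        _ ≤ d₂ * N.card := hmain
    exact Nat.le_of_mul_le_mul_left this (lt_of_lt_of_le Nat.zero_lt_one hd₂)
  -- Hall condition
  have hall : ∀ s : Finset ({x // x ∈ V₁} × Fin ℓ),
      s.card ≤ (s.biUnion fun p => G.neighborFinset (p.1 : V)).card := by
    intro s
    set T : Finset {x // x ∈ V₁} := s.image Prod.fst with hT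
    set T' : Finset V := T.image Subtype.val with hT'
    have h1 : s.card ≤ T.card * ℓ := by
      have hsub : s ⊆ T ×ˢ (Finset.univ : Finset (Fin ℓ)) := by
        intro p hp
        exact Finset.mem_product.mpr ⟨Finset.mem_image_of_mem _ hp, Finset.mem_univ _⟩
      calc s.card ≤ (T ×ˢ (Finset.univ : Finset (Fin ℓ))).card := Finset.card_le_card hsub
        _ = T.card * ℓ := by rw [Finset.card_product, Finset.card_univ, Fintype.card_fin]
    have hT'card : T'.card = T.card := Finset.card_image_of_injective _ Subtype.val_injective
    have hTV1 : T' ⊆ V₁ := by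
      intro x hx
      obtain ⟨v, _, rfl⟩ := Finset.mem_image.mp hx
      exact v.2
    have hbiU : (s.biUnion fun p => G.neighborFinset (p.1 : V))
        = T'.biUnion (fun v => G.neighborFinset v) := by
      ext w
      constructor
      · intro hw
        obtain ⟨p, hp, hw⟩ := Finset.mem_biUnion.mp hw
        exact Finset.mem_biUnion.mpr ⟨(p.1 : V),
          Finset.mem_image_of_mem _ (Finset.mem_image_of_mem _ hp), hw⟩
      · intro hw
        obtain ⟨x, hx, hw⟩ := Finset.mem_biUnion.mp hw
        obtain ⟨v, hv, rfl⟩ := Finset.mem_image.mp hx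
        obtain ⟨p, hp, rfl⟩ := Finset.mem_image.mp hv
        exact Finset.mem_biUnion.mpr ⟨p, hp, hw⟩
    calc s.card ≤ T.card * ℓ := h1
      _ = ℓ * T'.card := by rw [hT'card, mul_comm]
      _ ≤ (T'.biUnion (fun v => G.neighborFinset v)).card := key T' hTV1
      _ = _ := by rw [hbiU]
  obtain ⟨f, hf_inj, hf_mem⟩ :=
    (Finset.all_card_le_biUnion_card_iff_exists_injective
      (fun p : {x // x ∈ V₁} × Fin ℓ => G.neighborFinset (p.1 : V))).mp hall
  -- arbitrary neighbour assignment for V₂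
  have hV2nb : ∀ w ∈ V₂, (G.neighborFinset w).Nonempty := by
    intro w hw
    rw [← Finset.card_pos]
    exact (hdeg₂ w hw).1
  set g : V → V := fun w =>
    if h : (G.neighborFinset w).Nonempty then h.choose else w with hgdef
  have hg : ∀ w ∈ V₂, G.Adj w (g w) := by
    intro w hw
    have h := hV2nb w hw
    have : g w = h.choose := by rw [hgdef]; exact dif_pos h
    rw [this]
    exact (G.mem_neighborFinset _ _).mp h.choose_spec
  set Frange : Finset V := Finset.univ.image f with hFrange
  set R : Finset V := V₂ \ Frange with hR
  set leaves : {x // x ∈ V₁} → Finset V := fun v =>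
    (Finset.univ.image fun i : Fin ℓ => f (v, i)) ∪ (R.filter fun w => g w = (v : V))
    with hleaves
  set P : Finset (V × Finset V) := V₁.attach.image (fun v : {x // x ∈ V₁} => (((v : V)), leaves v)) with hP
  -- helper facts
  have hleavesV2 : ∀ v : {x // x ∈ V₁}, ∀ w ∈ leaves v, w ∈ V₂ := by
    intro v w hw
    rcases Finset.mem_union.mp hw with h | h
    · obtain ⟨i, _, rfl⟩ := Finset.mem_image.mp h
      exact hnb v v.2 _ ((G.mem_neighborFinset _ _).mp (hf_mem (v, i)))
    · exact (Finset.mem_sdiff.mp (Finset.mem_filter.mp h).1).1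
  have hleavesAdj : ∀ v : {x // x ∈ V₁}, ∀ w ∈ leaves v, G.Adj (v : V) w := by
    intro v w hw
    rcases Finset.mem_union.mp hw with h | h
    · obtain ⟨i, _, rfl⟩ := Finset.mem_image.mp h
      exact (G.mem_neighborFinset _ _).mp (hf_mem (v, i))
    · obtain ⟨hwR, hgw⟩ := Finset.mem_filter.mp h
      have hw2 : w ∈ V₂ := (Finset.mem_sdiff.mp hwR).1
      have := hg w hw2
      rw [hgw] at this
      exact this.symm
  have hleavesCard : ∀ v : {x // x ∈ V₁}, ℓ ≤ (leaves v).card := by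
    intro v
    have hinj : Function.Injective (fun i : Fin ℓ => f (v, i)) := by
      intro i j hij
      have := hf_inj hij
      exact congrArg Prod.snd this
    calc ℓ = (Finset.univ.image fun i : Fin ℓ => f (v, i)).card := by
          rw [Finset.card_image_of_injective _ hinj, Finset.card_univ, Fintype.card_fin]
      _ ≤ (leaves v).card := Finset.card_le_card Finset.subset_union_left
  have hld : ∀ v u : {x // x ∈ V₁}, (v : V) ≠ (u : V) →
      ∀ w, w ∈ leaves v → w ∈ leaves u → False := by
    intro v u hvu w hwv hwu
    rcases Finset.mem_union.mp hwv with h1 | h1 <;>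
      rcases Finset.mem_union.mp hwu with h2 | h2
    · obtain ⟨i, _, rfl⟩ := Finset.mem_image.mp h1
      obtain ⟨j, _, hj⟩ := Finset.mem_image.mp h2
      have := hf_inj hj
      exact hvu (congrArg (fun p => ((Prod.fst p : {x // x ∈ V₁}) : V)) this.symm)
    · obtain ⟨i, _, rfl⟩ := Finset.mem_image.mp h1
      have : f (v, i) ∈ Frange := Finset.mem_image_of_mem f (Finset.mem_univ _)
      exact (Finset.mem_sdiff.mp (Finset.mem_filter.mp h2).1).2 this
    · obtain ⟨j, _, rfl⟩ := Finset.mem_image.mp h2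
      have : f (u, j) ∈ Frange := Finset.mem_image_of_mem f (Finset.mem_univ _)
      exact (Finset.mem_sdiff.mp (Finset.mem_filter.mp h1).1).2 this
    · have e1 := (Finset.mem_filter.mp h1).2
      have e2 := (Finset.mem_filter.mp h2).2
      exact hvu (e1 ▸ e2 ▸ rfl)
  have hPmem : ∀ p ∈ P, ∃ v : {x // x ∈ V₁}, p = ((v : V), leaves v) := by
    intro p hp
    obtain ⟨v, _, rfl⟩ := Finset.mem_image.mp hp
    exact ⟨v, rfl⟩
  refine ⟨P, ⟨?_, ?_⟩, ?_, ?_⟩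
  · intro p hp
    obtain ⟨v, rfl⟩ := hPmem p hp
    refine ⟨hleavesCard v, ?_, fun x hx => hleavesAdj v x hx⟩
    intro hv
    exact hV1not2 (v : V) v.2 (hleavesV2 v _ hv)
  · intro p hp q hq hpq
    obtain ⟨v, rfl⟩ := hPmem p hp
    obtain ⟨u, rfl⟩ := hPmem q hq
    have hvu : (v : V) ≠ (u : V) := by
      intro h
      apply hpq
      have : v = u := Subtype.ext h
      rw [this]
    rw [Set.disjoint_left]
    intro x hx hx'
    simp only [Set.mem_insert_iff, Finset.mem_coe] at hx hx'
    rcases hx with rfl | hx <;> rcases hx' with h | h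
    · exact hvu h
    · exact hV1not2 _ v.2 (hleavesV2 u _ h)
    · exact hV1not2 (u : V) u.2 (hleavesV2 v _ (h ▸ hx))
    · exact hld v u hvu x hx h
  · intro x _
    have hx : x ∈ V₁ ∪ V₂ := hcover ▸ Finset.mem_univ x
    rcases Finset.mem_union.mp hx with h1 | h2
    · exact ⟨(((⟨x, h1⟩ : {x // x ∈ V₁}) : V), leaves ⟨x, h1⟩),
        Finset.mem_image_of_mem _ (Finset.mem_attach _ ⟨x, h1⟩), Or.inl rfl⟩
    · by_cases hxF : x ∈ Frange
      · obtain ⟨p0, _, rfl⟩ := Finset.mem_image.mp hxF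
        refine ⟨((p0.1 : V), leaves p0.1),
          Finset.mem_image_of_mem _ (Finset.mem_attach _ p0.1), Or.inr ?_⟩
        refine Finset.mem_union_left _ (Finset.mem_image.mpr ⟨p0.2, Finset.mem_univ _, ?_⟩)
        rw [Prod.mk.eta]
      · have hadj := hg x h2
        have hgV1 : g x ∈ V₁ := hnb2 x h2 _ hadj
        refine ⟨(((⟨g x, hgV1⟩ : {x // x ∈ V₁}) : V), leaves ⟨g x, hgV1⟩),
          Finset.mem_image_of_mem _ (Finset.mem_attach _ ⟨g x, hgV1⟩), Or.inr ?_⟩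
        refine Finset.mem_union_right _ (Finset.mem_filter.mpr ⟨?_, rfl⟩)
        exact Finset.mem_sdiff.mpr ⟨h2, hxF⟩
  · intro p hp
    obtain ⟨v, rfl⟩ := hPmem p hp
    exact ⟨v.2, fun w hw => hleavesV2 v w hw⟩
end

section
/- Let d ≥ 1 be an integer and let G be a bipartite graph with parts V₁ and V₂ such that deg(v) ≥ d for every v ∈ V₁. Then G contains an S_{⌊√d⌋}-packing which covers V₁. -/
/-- Auxiliary notion: a packing of stars with centres in `V₂` and leaves in `V₁`. -/
def StarAux {V : Type*} (G : SimpleGraph V) (V₁ V₂ : Finset V) (s : ℕ)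
    (Q : Finset (V × Finset V)) : Prop :=
  (∀ p ∈ Q, p.1 ∈ V₂ ∧ p.2 ⊆ V₁ ∧ s ≤ p.2.card ∧ ∀ x ∈ p.2, G.Adj p.1 x) ∧
  ∀ p ∈ Q, ∀ q ∈ Q, p ≠ q →
    Disjoint (insert p.1 (↑p.2 : Set V)) (insert q.1 (↑q.2 : Set V))

/-- A bipartite graph with parts `V₁, V₂` in which every vertex of `V₁` has degree
at least `d ≥ 1` contains an `S_{⌊√d⌋}`-packing covering `V₁`. -/
theorem bipartite_star_packing_covering {V : Type*} [Fintype V] [DecidableEq V] (G : SimpleGraph V)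
    [DecidableRel G.Adj] (V₁ V₂ : Finset V)
    (hdisj : Disjoint V₁ V₂) (hcover : V₁ ∪ V₂ = Finset.univ)
    (hbip : ∀ v w : V, G.Adj v w → (v ∈ V₁ ∧ w ∈ V₂) ∨ (v ∈ V₂ ∧ w ∈ V₁))
    (d : ℕ) (hd : 1 ≤ d)
    (hdeg₁ : ∀ v ∈ V₁, d ≤ G.degree v) :
    ∃ P : Finset (V × Finset V), IsStarPacking G (Nat.sqrt d) P ∧
      PackingCovers P ↑V₁ := by
  classical
  set s : ℕ := Nat.sqrt d with hs
  have hs1 : 1 ≤ s := Nat.sqrt_pos.mpr hd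
  have hss : s * s ≤ d := by
    have := Nat.sqrt_le' d
    rwa [pow_two] at this
  have hnot : ∀ {v : V}, v ∈ V₁ → v ∈ V₂ → False :=
    fun hv hw => Finset.disjoint_left.mp hdisj hv hw
  -- choose Q maximizing the number of covered V₁ vertices
  obtain ⟨Q, hQmem, hQmax'⟩ := Finset.exists_max_image
      ((Finset.univ : Finset (Finset (V × Finset V))).filter (StarAux G V₁ V₂ s))
      (fun Q => (Q.biUnion Prod.snd).card)
      ⟨∅, by simp [StarAux]⟩
  have hQ : StarAux G V₁ V₂ s Q := (Finset.mem_filter.mp hQmem).2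
  have hQmax : ∀ Q', StarAux G V₁ V₂ s Q' →
      (Q'.biUnion Prod.snd).card ≤ (Q.biUnion Prod.snd).card := by
    intro Q' h
    exact hQmax' Q' (Finset.mem_filter.mpr ⟨Finset.mem_univ _, h⟩)
  set B : Finset V := Q.biUnion Prod.snd with hB
  set U : Finset V := V₁ \ B with hU
  have hUV₁ : U ⊆ V₁ := Finset.sdiff_subset
  have hUB : ∀ {u : V}, u ∈ U → u ∉ B := fun hu => (Finset.mem_sdiff.mp hu).2
  -- generic: improving Q contradicts maximality
  have himp : ∀ (Q' : Finset (V × Finset V)) (u : V), StarAux G V₁ V₂ s Q' → u ∉ B →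
      insert u B ⊆ Q'.biUnion Prod.snd → False := by
    intro Q' u hQ' hu hsub
    have h1 : B.card < (insert u B).card := by
      rw [Finset.card_insert_of_notMem hu]; omega
    have h2 := Finset.card_le_card hsub
    have := hQmax Q' hQ'
    omega
  -- (A): every neighbour of an uncovered vertex is entirely unused by Q
  have hA : ∀ u ∈ U, ∀ x : V, G.Adj u x →
      x ∈ V₂ ∧ ∀ p ∈ Q, x ≠ p.1 ∧ x ∉ p.2 := by
    intro u hu x hadj
    have hu1 : u ∈ V₁ := hUV₁ hu
    have hx2 : x ∈ V₂ := by
      rcases hbip u x hadj with ⟨_, h⟩ | ⟨h, _⟩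
      · exact h
      · exact absurd h (fun hh => hnot hu1 hh)
    refine ⟨hx2, ?_⟩
    intro p hp
    have hxnl : x ∉ p.2 := fun hxp => hnot ((hQ.1 p hp).2.1 hxp) hx2
    refine ⟨?_, hxnl⟩
    intro hxc
    apply himp (insert (p.1, insert u p.2) (Q.erase p)) u ?_ (hUB hu)
    · -- coverage increases
      intro w hw
      rcases Finset.mem_insert.mp hw with rfl | hwB
      · exact Finset.mem_biUnion.mpr ⟨_, Finset.mem_insert_self _ _,
          Finset.mem_insert_self _ _⟩
      · obtain ⟨q, hq, hwq⟩ := Finset.mem_biUnion.mp hwB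
        by_cases hqp : q = p
        · exact Finset.mem_biUnion.mpr ⟨_, Finset.mem_insert_self _ _,
            Finset.mem_insert_of_mem (by subst hqp; exact hwq)⟩
        · exact Finset.mem_biUnion.mpr ⟨q,
            Finset.mem_insert_of_mem (Finset.mem_erase.mpr ⟨hqp, hq⟩), hwq⟩
    · -- StarAux for the new packing
      obtain ⟨h1, h2, h3, h4⟩ := hQ.1 p hp
      constructor
      · intro q hq
        rcases Finset.mem_insert.mp hq with rfl | hq'
        · refine ⟨h1, Finset.insert_subset hu1 h2,
            le_trans h3 (Finset.card_le_card (Finset.subset_insert _ _)), ?_⟩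
          intro y hy
          rcases Finset.mem_insert.mp hy with rfl | hy'
          · exact (hxc ▸ hadj).symm
          · exact h4 y hy'
        · exact hQ.1 q (Finset.mem_of_mem_erase hq')
      · have hd1 : ∀ b ∈ Q.erase p,
            Disjoint (insert (p.1, insert u p.2).1 (↑(p.1, insert u p.2).2 : Set V))
              (insert b.1 (↑b.2 : Set V)) := by
          intro b hb
          have hbQ := Finset.mem_of_mem_erase hb
          have hbp : p ≠ b := fun h => (Finset.ne_of_mem_erase hb) h.symm
          have hdpb := hQ.2 p hp b hbQ hbp
          rw [Set.disjoint_left]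
          intro a ha hab
          simp only [Finset.coe_insert, Set.mem_insert_iff, Finset.mem_coe] at ha hab
          rcases ha with rfl | rfl | ha'
          · exact Set.disjoint_left.mp hdpb (Set.mem_insert _ _)
              (by simpa [Finset.coe_insert] using hab)
          · -- a = u
            rcases hab with rfl | hab'
            · exact hnot hu1 (hQ.1 b hbQ).1
            · exact hUB hu (Finset.mem_biUnion.mpr ⟨b, hbQ, hab'⟩)
          · exact Set.disjoint_left.mp hdpb (Set.mem_insert_of_mem _ ha')
              (by simpa [Finset.coe_insert] using hab)
        intro a ha b hb hab
        rcases Finset.mem_insert.mp ha with rfl | ha' <;>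
          rcases Finset.mem_insert.mp hb with h | hb'
        · exact absurd h (by intro hh; exact hab hh.symm)
        · exact hd1 b hb'
        · exact (by subst h; exact (hd1 a ha').symm)
        · exact hQ.2 a (Finset.mem_of_mem_erase ha') b (Finset.mem_of_mem_erase hb') hab
  -- (B): every unused vertex of V₂ has fewer than s neighbours in U
  have hBnd : ∀ x : V, (∀ p ∈ Q, x ≠ p.1 ∧ x ∉ p.2) →
      (U.filter (fun u => G.Adj x u)).card ≤ s - 1 := by
    intro x hfree
    by_contra hcon
    set F : Finset V := U.filter (fun u => G.Adj x u) with hF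
    have hsF : s ≤ F.card := by omega
    obtain ⟨u₀, hu₀⟩ : F.Nonempty := Finset.card_pos.mp (by omega)
    have hu₀U : u₀ ∈ U := (Finset.mem_filter.mp hu₀).1
    have hu₀adj : G.Adj x u₀ := (Finset.mem_filter.mp hu₀).2
    have hx2 : x ∈ V₂ := by
      rcases hbip x u₀ hu₀adj with ⟨_, h⟩ | ⟨h, _⟩
      · exact absurd h (fun hh => hnot (hUV₁ hu₀U) hh)
      · exact h
    apply himp (insert (x, F) Q) u₀ ?_ (hUB hu₀U)
    · intro w hw
      rcases Finset.mem_insert.mp hw with rfl | hwB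
      · exact Finset.mem_biUnion.mpr ⟨_, Finset.mem_insert_self _ _, hu₀⟩
      · obtain ⟨q, hq, hwq⟩ := Finset.mem_biUnion.mp hwB
        exact Finset.mem_biUnion.mpr ⟨q, Finset.mem_insert_of_mem hq, hwq⟩
    · constructor
      · intro q hq
        rcases Finset.mem_insert.mp hq with rfl | hq'
        · exact ⟨hx2, (Finset.filter_subset _ _).trans hUV₁, hsF,
            fun y hy => (Finset.mem_filter.mp hy).2⟩
        · exact hQ.1 q hq'
      · have hd1 : ∀ b ∈ Q,
            Disjoint (insert (x, F).1 (↑(x, F).2 : Set V)) (insert b.1 (↑b.2 : Set V)) := by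
          intro b hb
          rw [Set.disjoint_left]
          intro a ha hab
          simp only [Finset.coe_insert, Set.mem_insert_iff, Finset.mem_coe] at ha hab
          rcases ha with rfl | ha'
          · rcases hab with h | h
            · exact (hfree b hb).1 h
            · exact (hfree b hb).2 h
          · have haU : a ∈ U := (Finset.mem_filter.mp ha').1
            rcases hab with rfl | h
            · exact hnot (hUV₁ haU) (hQ.1 b hb).1
            · exact hUB haU (Finset.mem_biUnion.mpr ⟨b, hb, h⟩)
        intro a ha b hb hab
        rcases Finset.mem_insert.mp ha with rfl | ha' <;>
          rcases Finset.mem_insert.mp hb with h | hb'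
        · exact absurd h (by intro hh; exact hab hh.symm)
        · exact hd1 b hb'
        · exact (by subst h; exact (hd1 a ha').symm)
        · exact hQ.2 a ha' b hb' hab
  -- counting: s-fold Hall condition
  have hcount : ∀ T : Finset V, T ⊆ U →
      s * T.card ≤ (T.biUnion (fun u => G.neighborFinset u)).card := by
    intro T hTU
    set Bn : Finset V := T.biUnion (fun u => G.neighborFinset u) with hBn
    have key1 : ∀ u ∈ T, (G.neighborFinset u).card =
        ∑ x ∈ Bn, (if x ∈ G.neighborFinset u then 1 else 0) := by
      intro u hu
      have hfe : Bn.filter (fun x => x ∈ G.neighborFinset u) = G.neighborFinset u := by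
        ext x
        constructor
        · intro hx; exact (Finset.mem_filter.mp hx).2
        · intro hx; exact Finset.mem_filter.mpr ⟨Finset.mem_biUnion.mpr ⟨u, hu, hx⟩, hx⟩
      rw [← Finset.card_filter, hfe]
    have low : d * T.card ≤ ∑ u ∈ T, (G.neighborFinset u).card := by
      calc d * T.card = ∑ _u ∈ T, d := by rw [Finset.sum_const, smul_eq_mul, mul_comm]
        _ ≤ ∑ u ∈ T, (G.neighborFinset u).card := by
            apply Finset.sum_le_sum
            intro u hu
            have := hdeg₁ u (hUV₁ (hTU hu))
            rwa [SimpleGraph.degree] at this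
    have swap : ∑ u ∈ T, (G.neighborFinset u).card =
        ∑ x ∈ Bn, (T.filter (fun u => x ∈ G.neighborFinset u)).card := by
      rw [Finset.sum_congr rfl key1, Finset.sum_comm]
      apply Finset.sum_congr rfl
      intro x _
      rw [Finset.card_filter]
    have high : ∀ x ∈ Bn, (T.filter (fun u => x ∈ G.neighborFinset u)).card ≤ s - 1 := by
      intro x hx
      obtain ⟨u, hu, hxu⟩ := Finset.mem_biUnion.mp hx
      have hadj : G.Adj u x := (G.mem_neighborFinset _ _).mp hxu
      have hfree := (hA u (hTU hu) x hadj).2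
      refine le_trans (Finset.card_le_card ?_) (hBnd x hfree)
      intro w hw
      obtain ⟨hwT, hwx⟩ := Finset.mem_filter.mp hw
      exact Finset.mem_filter.mpr ⟨hTU hwT,
        ((G.mem_neighborFinset _ _).mp hwx).symm⟩
    have tot : d * T.card ≤ (s - 1) * Bn.card := by
      calc d * T.card ≤ ∑ u ∈ T, (G.neighborFinset u).card := low
        _ = ∑ x ∈ Bn, (T.filter (fun u => x ∈ G.neighborFinset u)).card := swap
        _ ≤ ∑ _x ∈ Bn, (s - 1) := Finset.sum_le_sum high
        _ = (s - 1) * Bn.card := by rw [Finset.sum_const, smul_eq_mul, mul_comm]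
    have hms : s * (s * T.card) ≤ s * Bn.card := by
      calc s * (s * T.card) = s * s * T.card := by ring
        _ ≤ d * T.card := Nat.mul_le_mul_right _ hss
        _ ≤ (s - 1) * Bn.card := tot
        _ ≤ s * Bn.card := Nat.mul_le_mul_right _ (by omega)
    exact Nat.le_of_mul_le_mul_left hms (by omega)
  -- Hall's theorem
  obtain ⟨f, hfinj, hfmem⟩ :
      ∃ f : {u // u ∈ U} × Fin s → V, Function.Injective f ∧
        ∀ p : {u // u ∈ U} × Fin s, f p ∈ G.neighborFinset p.1.1 := by
    rw [← Finset.all_card_le_biUnion_card_iff_exists_injective]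
    intro S
    set T : Finset V := S.image (fun p => (p.1.1 : V)) with hT
    have hTU : T ⊆ U := by
      intro x hx
      obtain ⟨p, _, rfl⟩ := Finset.mem_image.mp hx
      exact p.1.2
    have h1 : S.card ≤ T.card * s := by
      have := Finset.card_le_card_of_injOn
        (f := fun p : {u // u ∈ U} × Fin s => ((p.1.1 : V), p.2))
        (s := S) (t := T ×ˢ (Finset.univ : Finset (Fin s)))
        (fun p hp => Finset.mem_product.mpr
          ⟨Finset.mem_image.mpr ⟨p, hp, rfl⟩, Finset.mem_univ _⟩)
        (fun p _ q _ h => by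
          simp only [Prod.mk.injEq] at h
          exact Prod.ext (Subtype.ext h.1) h.2)
      simpa [Finset.card_product] using this
    have h2 : T.biUnion (fun u => G.neighborFinset u) ⊆
        S.biUnion (fun p => G.neighborFinset p.1.1) := by
      intro x hx
      obtain ⟨u, hu, hxu⟩ := Finset.mem_biUnion.mp hx
      obtain ⟨p, hp, hpu⟩ := Finset.mem_image.mp hu
      exact Finset.mem_biUnion.mpr ⟨p, hp, by rw [hpu]; exact hxu⟩
    calc S.card ≤ T.card * s := h1
      _ = s * T.card := mul_comm _ _
      _ ≤ (T.biUnion (fun u => G.neighborFinset u)).card := hcount T hTU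
      _ ≤ (S.biUnion (fun p => G.neighborFinset p.1.1)).card := Finset.card_le_card h2
  -- assemble the final packing
  set leaves : {u // u ∈ U} → Finset V :=
    fun u => (Finset.univ : Finset (Fin s)).image (fun i => f (u, i)) with hleaves
  have hleafcard : ∀ u, (leaves u).card = s := by
    intro u
    rw [hleaves]
    rw [Finset.card_image_of_injective _ (fun i j hij => by
      have := hfinj hij; exact (Prod.mk.injEq _ _ _ _).mp this |>.2)]
    simp
  have hleafadj : ∀ u x, x ∈ leaves u → G.Adj (u : V) x := by
    intro u x hx
    rw [hleaves] at hx
    obtain ⟨i, _, rfl⟩ := Finset.mem_image.mp hx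
    exact (G.mem_neighborFinset _ _).mp (hfmem (u, i))
  have hleaffree : ∀ (u : {u // u ∈ U}) (x : V), x ∈ leaves u →
      x ∈ V₂ ∧ ∀ p ∈ Q, x ≠ p.1 ∧ x ∉ p.2 := by
    intro u x hx
    exact hA u u.2 x (hleafadj u x hx)
  refine ⟨Q ∪ U.attach.image (fun u => (u.1, leaves u)), ?_, ?_⟩
  · constructor
    · intro p hp
      rcases Finset.mem_union.mp hp with hpQ | hpN
      · obtain ⟨h1, h2, h3, h4⟩ := hQ.1 p hpQ
        exact ⟨h3, fun hh => hnot (h2 hh) h1, h4⟩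
      · obtain ⟨u, _, rfl⟩ := Finset.mem_image.mp hpN
        refine ⟨by rw [hleafcard], ?_, fun x hx => hleafadj u x hx⟩
        intro hh
        exact hnot (hUV₁ u.2) (hleaffree u _ hh).1
    · have hnew : ∀ (u : {u // u ∈ U}), ∀ q ∈ Q,
          Disjoint (insert u.1 (↑(leaves u) : Set V)) (insert q.1 (↑q.2 : Set V)) := by
        intro u q hq
        rw [Set.disjoint_left]
        intro a ha hb
        simp only [Finset.coe_insert, Set.mem_insert_iff, Finset.mem_coe] at ha hb
        rcases ha with rfl | ha'
        · rcases hb with h | hb'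
          · exact hnot (hUV₁ u.2) (by rw [h]; exact (hQ.1 q hq).1)
          · exact hUB u.2 (Finset.mem_biUnion.mpr ⟨q, hq, hb'⟩)
        · obtain ⟨hne, hnl⟩ := (hleaffree u a ha').2 q hq
          rcases hb with h | hb'
          · exact hne h
          · exact hnl hb'
      have hnn : ∀ u u' : {u // u ∈ U}, u ≠ u' →
          Disjoint (insert u.1 (↑(leaves u) : Set V)) (insert u'.1 (↑(leaves u') : Set V)) := by
        intro u u' huu
        rw [Set.disjoint_left]
        intro a ha hb
        simp only [Finset.coe_insert, Set.mem_insert_iff, Finset.mem_coe] at ha hb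
        rcases ha with rfl | ha' <;> rcases hb with h | hb'
        · exact huu (Subtype.ext h)
        · exact hnot (hUV₁ u.2) (hleaffree u' _ hb').1
        · exact hnot (h ▸ hUV₁ u'.2) (hleaffree u _ ha').1
        · obtain ⟨i, _, hi⟩ := Finset.mem_image.mp ha'
          obtain ⟨j, _, hj⟩ := Finset.mem_image.mp hb'
          have : (u, i) = (u', j) := hfinj (by rw [hi, hj])
          exact huu (congrArg Prod.fst this)
      intro p hp q hq hpq
      rcases Finset.mem_union.mp hp with hpQ | hpN <;>
        rcases Finset.mem_union.mp hq with hqQ | hqN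
      · exact hQ.2 p hpQ q hqQ hpq
      · obtain ⟨u, _, rfl⟩ := Finset.mem_image.mp hqN
        exact (hnew u p hpQ).symm
      · obtain ⟨u, _, rfl⟩ := Finset.mem_image.mp hpN
        exact hnew u q hqQ
      · obtain ⟨u, _, rfl⟩ := Finset.mem_image.mp hpN
        obtain ⟨u', _, rfl⟩ := Finset.mem_image.mp hqN
        exact hnn u u' (fun h => hpq (by rw [h]))
  · intro v hv
    have hv1 : v ∈ V₁ := hv
    by_cases hvB : v ∈ B
    · obtain ⟨q, hq, hvq⟩ := Finset.mem_biUnion.mp hvB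
      exact ⟨q, Finset.mem_union_left _ hq, Or.inr hvq⟩
    · have hvU : v ∈ U := Finset.mem_sdiff.mpr ⟨hv1, hvB⟩
      refine ⟨(v, leaves ⟨v, hvU⟩), Finset.mem_union_right _ ?_, Or.inl rfl⟩
      exact Finset.mem_image.mpr ⟨⟨v, hvU⟩, Finset.mem_attach _ _, rfl⟩
end

section
/- Let d ≥ 1 be an integer, let G be a bipartite graph with parts V₁ and V₂ such that deg(v) ≥ d for every v ∈ V₁, and set k = ⌊√d⌋. Let M be an S_k-packing in G with all centres in V₂ which is maximal under vertex inclusion, i.e. there is no S_k-packing with all centres in V₂ whose set of covered vertices strictly contains the set V(M) of vertices covered by M. Then: (a) no edge of G joins a vertex of V₁ \ V(M) to a vertex of V₂ ∩ V(M), and consequently every v ∈ V₁ \ V(M) has at least d neighbours in V₂ \ V(M); and (b) every u ∈ V₂ \ V(M) has fewer than k neighbours in V₁ \ V(M). -/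
/-- The set of vertices covered by the packing `P`. -/
def PackingVertices {V : Type*} [DecidableEq V] (P : Finset (V × Finset V)) : Finset V :=
  P.biUnion fun p => insert p.1 p.2

lemma mem_pv {V : Type*} [DecidableEq V] (P : Finset (V × Finset V)) (v : V) :
    v ∈ PackingVertices P ↔ ∃ p ∈ P, v ∈ insert p.1 p.2 := by
  simp [PackingVertices]


/-- Properties of a maximal `S_{⌊√d⌋}`-packing with centres in `V₂` in a bipartite
graph whose `V₁`-side has minimum degree `d`. -/
theorem maximal_packing_properties {V : Type*} [Fintype V] [DecidableEq V]
    (G : SimpleGraph V) [DecidableRel G.Adj] (V₁ V₂ : Finset V)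
    (hdisj : Disjoint V₁ V₂) (hcover : V₁ ∪ V₂ = Finset.univ)
    (hbip : ∀ v w : V, G.Adj v w → (v ∈ V₁ ∧ w ∈ V₂) ∨ (v ∈ V₂ ∧ w ∈ V₁))
    (d : ℕ) (hd : 1 ≤ d)
    (hdeg₁ : ∀ v ∈ V₁, d ≤ G.degree v)
    (M : Finset (V × Finset V))
    (hM : IsStarPacking G (Nat.sqrt d) M)
    (hMcentres : ∀ p ∈ M, p.1 ∈ V₂)
    (hMmax : ¬ ∃ M' : Finset (V × Finset V), IsStarPacking G (Nat.sqrt d) M' ∧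
        (∀ p ∈ M', p.1 ∈ V₂) ∧ PackingVertices M ⊂ PackingVertices M') :
    ((∀ v ∈ V₁ \ PackingVertices M, ∀ w ∈ V₂ ∩ PackingVertices M, ¬ G.Adj v w) ∧
      ∀ v ∈ V₁ \ PackingVertices M,
        d ≤ ((V₂ \ PackingVertices M).filter (G.Adj v)).card) ∧
    ∀ u ∈ V₂ \ PackingVertices M,
      ((V₁ \ PackingVertices M).filter (G.Adj u)).card < Nat.sqrt d := by
  obtain ⟨hMstar, hMdisj⟩ := hM
  -- leaves of stars are in V₁
  have hleaves : ∀ p ∈ M, ∀ x ∈ p.2, x ∈ V₁ := by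
    intro p hp x hx
    rcases hbip _ _ ((hMstar p hp).2.2 x hx) with ⟨h1, _⟩ | ⟨_, h2⟩
    · exact absurd (hMcentres p hp) (Finset.disjoint_left.mp hdisj h1)
    · exact h2
  -- part (a1)
  have haux1 : ∀ v ∈ V₁ \ PackingVertices M, ∀ w ∈ V₂ ∩ PackingVertices M, ¬ G.Adj v w := by
    intro v hv w hw hadj
    obtain ⟨hv1, hvM⟩ := Finset.mem_sdiff.mp hv
    obtain ⟨hw2, hwM⟩ := Finset.mem_inter.mp hw
    obtain ⟨p, hp, hwp⟩ := (mem_pv M w).mp hwM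
    have hwcen : w = p.1 := by
      rcases Finset.mem_insert.mp hwp with h | h
      · exact h
      · exact absurd (hleaves p hp w h) (Finset.disjoint_right.mp hdisj hw2)
    rw [hwcen] at hadj
    have hvnp : ∀ q ∈ M, v ∉ insert q.1 (↑q.2 : Set V) := by
      intro q hq hc
      exact hvM ((mem_pv M v).mpr ⟨q, hq, by exact_mod_cast hc⟩)
    apply hMmax
    refine ⟨insert (p.1, insert v p.2) (M.erase p), ⟨?_, ?_⟩, ?_, ?_⟩
    · intro q hq
      rcases Finset.mem_insert.mp hq with rfl | hq'
      · refine ⟨le_trans (hMstar p hp).1 (Finset.card_le_card (Finset.subset_insert _ _)), ?_, ?_⟩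
        · simp only [Finset.mem_insert]
          push_neg
          refine ⟨?_, (hMstar p hp).2.1⟩
          intro h
          apply hvM
          rw [← h]
          exact (mem_pv M p.1).mpr ⟨p, hp, Finset.mem_insert_self _ _⟩
        · intro x hx
          rcases Finset.mem_insert.mp hx with rfl | hx'
          · exact hadj.symm
          · exact (hMstar p hp).2.2 x hx'
      · exact hMstar q (Finset.mem_of_mem_erase hq')
    · have key : ∀ q ∈ M.erase p,
          Disjoint (insert p.1 (insert v (↑p.2 : Set V))) (insert q.1 (↑q.2 : Set V)) := by
        intro q hq
        have hne : p ≠ q := fun h => (Finset.ne_of_mem_erase hq) h.symm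
        have hd1 := hMdisj p hp q (Finset.mem_of_mem_erase hq) hne
        rw [Set.disjoint_left]
        intro x hx hxq
        rcases Set.mem_insert_iff.mp hx with rfl | hx'
        · exact Set.disjoint_left.mp hd1 (Set.mem_insert _ _) hxq
        · rcases Set.mem_insert_iff.mp hx' with rfl | hx''
          · exact hvnp q (Finset.mem_of_mem_erase hq) hxq
          · exact Set.disjoint_left.mp hd1 (Set.mem_insert_of_mem _ hx'') hxq
      intro q hq r hr hqr
      rcases Finset.mem_insert.mp hq with rfl | hq' <;>
        rcases Finset.mem_insert.mp hr with rfl | hr'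
      · exact absurd rfl hqr
      · simpa using key r hr'
      · simpa using (key q hq').symm
      · exact hMdisj q (Finset.mem_of_mem_erase hq') r (Finset.mem_of_mem_erase hr')
          hqr
    · intro q hq
      rcases Finset.mem_insert.mp hq with rfl | hq'
      · exact hMcentres p hp
      · exact hMcentres q (Finset.mem_of_mem_erase hq')
    · constructor
      · intro x hx
        obtain ⟨q, hq, hxq⟩ := (mem_pv M x).mp hx
        rw [mem_pv]
        by_cases hqp : q = p
        · subst hqp
          exact ⟨(q.1, insert v q.2), Finset.mem_insert_self _ _, by
            rcases Finset.mem_insert.mp hxq with rfl | h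
            · exact Finset.mem_insert_self _ _
            · exact Finset.mem_insert_of_mem (Finset.mem_insert_of_mem h)⟩
        · exact ⟨q, Finset.mem_insert_of_mem (Finset.mem_erase.mpr ⟨hqp, hq⟩), hxq⟩
      · intro hsub
        apply hvM
        apply hsub
        rw [mem_pv]
        exact ⟨(p.1, insert v p.2), Finset.mem_insert_self _ _,
          Finset.mem_insert_of_mem (Finset.mem_insert_self _ _)⟩
  -- part (a2)
  have haux2 : ∀ v ∈ V₁ \ PackingVertices M,
      d ≤ ((V₂ \ PackingVertices M).filter (G.Adj v)).card := by
    intro v hv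
    obtain ⟨hv1, hvM⟩ := Finset.mem_sdiff.mp hv
    have hsub : G.neighborFinset v ⊆ (V₂ \ PackingVertices M).filter (G.Adj v) := by
      intro w hw
      rw [SimpleGraph.mem_neighborFinset] at hw
      have hw2 : w ∈ V₂ := by
        rcases hbip _ _ hw with ⟨_, h⟩ | ⟨h, _⟩
        · exact h
        · exact absurd hv1 (Finset.disjoint_right.mp hdisj h)
      have hwM : w ∉ PackingVertices M := fun hc =>
        haux1 v hv w (Finset.mem_inter.mpr ⟨hw2, hc⟩) hw
      exact Finset.mem_filter.mpr ⟨Finset.mem_sdiff.mpr ⟨hw2, hwM⟩, hw⟩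
    calc d ≤ G.degree v := hdeg₁ v hv1
      _ = (G.neighborFinset v).card := rfl
      _ ≤ _ := Finset.card_le_card hsub
  refine ⟨⟨haux1, haux2⟩, ?_⟩
  -- part (b)
  intro u hu
  obtain ⟨hu2, huM⟩ := Finset.mem_sdiff.mp hu
  by_contra hcon
  push_neg at hcon
  obtain ⟨S, hSsub, hScard⟩ := Finset.exists_subset_card_eq hcon
  have hSprop : ∀ x ∈ S, x ∈ V₁ ∧ x ∉ PackingVertices M ∧ G.Adj u x := by
    intro x hx
    have := Finset.mem_filter.mp (hSsub hx)
    obtain ⟨h1, h2⟩ := Finset.mem_sdiff.mp this.1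
    exact ⟨h1, h2, this.2⟩
  have hnew_fresh : ∀ x ∈ insert u (↑S : Set V), x ∉ PackingVertices M := by
    intro x hx
    rcases Set.mem_insert_iff.mp hx with rfl | hxS
    · exact huM
    · exact (hSprop x (by exact_mod_cast hxS)).2.1
  apply hMmax
  refine ⟨insert (u, S) M, ⟨?_, ?_⟩, ?_, ?_⟩
  · intro q hq
    rcases Finset.mem_insert.mp hq with rfl | hq'
    · refine ⟨hScard.ge, ?_, fun x hx => (hSprop x hx).2.2⟩
      intro hc
      exact absurd hu2 (Finset.disjoint_left.mp hdisj (hSprop u hc).1)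
    · exact hMstar q hq'
  · have key : ∀ q ∈ M, Disjoint (insert u (↑S : Set V)) (insert q.1 (↑q.2 : Set V)) := by
      intro q hq
      rw [Set.disjoint_left]
      intro x hx hxq
      exact hnew_fresh x hx ((mem_pv M x).mpr ⟨q, hq, by exact_mod_cast hxq⟩)
    intro q hq r hr hqr
    rcases Finset.mem_insert.mp hq with rfl | hq' <;>
      rcases Finset.mem_insert.mp hr with rfl | hr'
    · exact absurd rfl hqr
    · exact key r hr'
    · exact (key q hq').symm
    · exact hMdisj q hq' r hr' hqr
  · intro q hq
    rcases Finset.mem_insert.mp hq with rfl | hq'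
    · exact hu2
    · exact hMcentres q hq'
  · constructor
    · intro x hx
      obtain ⟨q, hq, hxq⟩ := (mem_pv M x).mp hx
      exact (mem_pv _ x).mpr ⟨q, Finset.mem_insert_of_mem hq, hxq⟩
    · intro hsub
      apply huM
      apply hsub
      exact (mem_pv _ u).mpr ⟨(u, S), Finset.mem_insert_self _ _, Finset.mem_insert_self _ _⟩
end

section
/- For all integers d ≥ 1 and n ≥ d there exists a graph G whose vertex set is partitioned into three sets A, B, C with |A| = n, |B| = ⌈√d⌉·n and |C| = d, such that: A, B and C are each independent sets; every vertex of A has exactly d neighbours, all of them in B; every vertex of B has at most ⌈√d⌉ neighbours in A; every vertex of B is adjacent to every vertex of C; and there are no edges between A and C. Moreover, any such graph has minimum degree exactly d. -/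
/-!
Give the vertex `a` of `A` the `d` consecutive edge slots `a * d, …, a * d + d - 1` and join it
to the vertices `t % |B|` of `B` for its slots `t`. Since `d ≤ n ≤ |B|`, the slots of `a` land
on distinct vertices, so `a` has degree `d`; the `n * d ≤ ⌈√d⌉ * |B|` slots wrap around `B` at
most `⌈√d⌉` times, so every vertex of `B` has at most `⌈√d⌉` neighbours in `A`.

In any such graph, the vertices of `A` have degree `d`, those of `B` are joined to the `d`
vertices of `C`, and those of `C` to the `⌈√d⌉ * n ≥ d` vertices of `B`.
-/

/-- The construction of Theorem 2: the vertex set is partitioned into `A`, `B`, `C`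
with `|A| = n`, `|B| = ⌈√d⌉ n`, `|C| = d`, all three independent; every vertex of `A`
has exactly `d` neighbours, all in `B`; every vertex of `B` has at most `⌈√d⌉`
neighbours in `A`; `B` and `C` are completely joined; and there are no `A`–`C` edges. -/
def IsLowerBoundGraph (d n : ℕ) {V : Type} [Fintype V] [DecidableEq V] (G : SimpleGraph V)
    (A B C : Finset V) : Prop :=
  Disjoint A B ∧ Disjoint A C ∧ Disjoint B C ∧ A ∪ B ∪ C = Finset.univ ∧
  A.card = n ∧ B.card = ⌈Real.sqrt d⌉₊ * n ∧ C.card = d ∧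
  (∀ v ∈ A, ∀ w ∈ A, ¬ G.Adj v w) ∧
  (∀ v ∈ B, ∀ w ∈ B, ¬ G.Adj v w) ∧
  (∀ v ∈ C, ∀ w ∈ C, ¬ G.Adj v w) ∧
  (∀ a ∈ A, (G.neighborSet a).ncard = d ∧ G.neighborSet a ⊆ ↑B) ∧
  (∀ b ∈ B, (G.neighborSet b ∩ ↑A).ncard ≤ ⌈Real.sqrt d⌉₊) ∧
  (∀ b ∈ B, ∀ c ∈ C, G.Adj b c) ∧
  (∀ a ∈ A, ∀ c ∈ C, ¬ G.Adj a c)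

lemma le_ceil_sqrt_mul_self (d : ℕ) : d ≤ ⌈√(d : ℝ)⌉₊ * ⌈√(d : ℝ)⌉₊ := by
  have h : (d : ℝ) ≤ (⌈√(d : ℝ)⌉₊ : ℝ) ^ 2 := (Real.sqrt_le_iff.1 (Nat.le_ceil _)).2
  rw [sq] at h
  exact_mod_cast h

lemma le_ceil_sqrt_mul {d n : ℕ} (hn : d ≤ n) : d ≤ ⌈√(d : ℝ)⌉₊ * n := by
  rcases Nat.eq_zero_or_pos d with rfl | hd
  · exact Nat.zero_le _
  · have hs : 0 < ⌈√(d : ℝ)⌉₊ := Nat.ceil_pos.2 (Real.sqrt_pos.2 (by exact_mod_cast hd))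
    exact hn.trans (Nat.le_mul_of_pos_left n hs)

lemma SimpleGraph.card_le_ncard_neighborSet {V : Type*} (G : SimpleGraph V) [Finite V]
    {v : V} {S : Finset V} (hS : ∀ w ∈ S, G.Adj v w) : S.card ≤ (G.neighborSet v).ncard := by
  rw [← Set.ncard_coe_finset]
  exact Set.ncard_le_ncard (fun w hw => hS w hw)

namespace IsLowerBoundGraph

variable {d n : ℕ} {V : Type} [Fintype V] [DecidableEq V] {G : SimpleGraph V} {A B C : Finset V}

lemma le_ncard_neighborSet (h : IsLowerBoundGraph d n G A B C) (hn : d ≤ n) (v : V) :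
    d ≤ (G.neighborSet v).ncard := by
  obtain ⟨-, -, -, hcover, -, hB, hC, -, -, -, hA, -, hBC, -⟩ := h
  have hv : v ∈ A ∪ B ∪ C := hcover ▸ Finset.mem_univ v
  simp only [Finset.mem_union] at hv
  rcases hv with (hvA | hvB) | hvC
  · exact (hA v hvA).1.ge
  · exact hC ▸ G.card_le_ncard_neighborSet (hBC v hvB)
  · calc d ≤ ⌈√(d : ℝ)⌉₊ * n := le_ceil_sqrt_mul hn
      _ = B.card := hB.symm
      _ ≤ (G.neighborSet v).ncard :=
        G.card_le_ncard_neighborSet fun b hb => (hBC b hb v hvC).symm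

lemma exists_ncard_neighborSet_eq (h : IsLowerBoundGraph d n G A B C) (hn : 0 < n) :
    ∃ v, (G.neighborSet v).ncard = d := by
  obtain ⟨-, -, -, -, hcardA, -, -, -, -, -, hA, -⟩ := h
  obtain ⟨a, ha⟩ := Finset.card_pos.1 (hcardA ▸ hn)
  exact ⟨a, (hA a ha).1⟩

end IsLowerBoundGraph

lemma Nat.div_eq_iff_mem_Ico {d t a : ℕ} (hd : 0 < d) :
    t / d = a ↔ t ∈ Set.Ico (a * d) (a * d + d) := by
  rw [Set.mem_Ico, Nat.div_eq_iff hd]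
  omega

lemma Nat.ncard_setOf_lt_and_mod_eq_le {N m q : ℕ} (hN : N ≤ q * m) (b : ℕ) :
    {t | t < N ∧ t % m = b}.ncard ≤ q := by
  have hmaps : ∀ t ∈ {t | t < N ∧ t % m = b}, t / m ∈ Set.Iio q := fun t ⟨htN, _⟩ =>
    (Nat.div_lt_iff_lt_mul (Nat.pos_of_ne_zero (by rintro rfl; omega))).2 (by omega)
  have hinj : Set.InjOn (· / m) {t | t < N ∧ t % m = b} := fun t ⟨_, ht⟩ u ⟨_, hu⟩ htu => by
    rw [← Nat.mod_add_div t m, ← Nat.mod_add_div u m, ht, hu]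
    exact congrArg (b + m * ·) htu
  simpa using Set.ncard_le_ncard_of_injOn _ hmaps hinj

def wrapAdj (d m a b : ℕ) : Prop := ∃ t, t / d = a ∧ t % m = b

lemma ncard_wrapAdj_left {d m : ℕ} (hd : 0 < d) (hdm : d ≤ m) (a : ℕ) :
    {b : Fin m | wrapAdj d m a b}.ncard = d := by
  have himage :
      Fin.val '' {b : Fin m | wrapAdj d m a b} = (· % m) '' Set.Ico (a * d) (a * d + d) := by
    ext x
    constructor
    · rintro ⟨b, ⟨t, ht, hb⟩, rfl⟩
      exact ⟨t, (Nat.div_eq_iff_mem_Ico hd).1 ht, hb⟩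
    · rintro ⟨t, ht, rfl⟩
      exact ⟨⟨t % m, Nat.mod_lt _ (by omega)⟩, ⟨t, (Nat.div_eq_iff_mem_Ico hd).2 ht, rfl⟩, rfl⟩
  have hinj : Set.InjOn (· % m) (Set.Ico (a * d) (a * d + d)) :=
    (Nat.mod_injOn_Ico (a * d) m).mono <| by
      rw [Finset.coe_Ico]
      exact Set.Ico_subset_Ico_right (by omega)
  rw [← Set.ncard_image_of_injective _ Fin.val_injective, himage, hinj.ncard_image,
    Set.ncard_Ico_nat]
  omega

lemma ncard_wrapAdj_right_le {d m n q : ℕ} (hd : 0 < d) (hnd : n * d ≤ q * m) (b : ℕ) :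
    {a : Fin n | wrapAdj d m a b}.ncard ≤ q := by
  have hsub :
      Fin.val '' {a : Fin n | wrapAdj d m a b} ⊆ (· / d) '' {t | t < n * d ∧ t % m = b} := by
    rintro _ ⟨a, ⟨t, ht, hb⟩, rfl⟩
    refine ⟨t, ⟨?_, hb⟩, ht⟩
    have := a.isLt
    rw [← ht, Nat.div_lt_iff_lt_mul hd] at this
    exact this
  have hfin : {t | t < n * d ∧ t % m = b}.Finite := (Set.finite_lt_nat _).subset fun t ht => ht.1
  calc {a : Fin n | wrapAdj d m a b}.ncard
      = (Fin.val '' {a : Fin n | wrapAdj d m a b}).ncard :=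
        (Set.ncard_image_of_injective _ Fin.val_injective).symm
    _ ≤ ((· / d) '' {t | t < n * d ∧ t % m = b}).ncard := Set.ncard_le_ncard hsub (hfin.image _)
    _ ≤ {t | t < n * d ∧ t % m = b}.ncard := Set.ncard_image_le hfin
    _ ≤ q := Nat.ncard_setOf_lt_and_mod_eq_le hnd b

section LayeredGraph

variable {α β γ : Type*} (r : α → β → Prop)

def layeredGraph : SimpleGraph (α ⊕ β ⊕ γ) :=
  SimpleGraph.fromRel fun
    | .inl a, .inr (.inl b) => r a b
    | .inr (.inl _), .inr (.inr _) => True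
    | _, _ => False

variable {r}

@[simp] lemma not_layeredGraph_adj_inl_inl {a a' : α} :
    ¬ (layeredGraph r (γ := γ)).Adj (.inl a) (.inl a') := by
  simp [layeredGraph]

@[simp] lemma layeredGraph_adj_inl_inr_inl {a : α} {b : β} :
    (layeredGraph r (γ := γ)).Adj (.inl a) (.inr (.inl b)) ↔ r a b := by
  simp [layeredGraph]

@[simp] lemma layeredGraph_adj_inr_inl_inl {a : α} {b : β} :
    (layeredGraph r (γ := γ)).Adj (.inr (.inl b)) (.inl a) ↔ r a b := by
  simp [layeredGraph]

@[simp] lemma not_layeredGraph_adj_inl_inr_inr {a : α} {c : γ} :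
    ¬ (layeredGraph r).Adj (.inl a) (.inr (.inr c)) := by
  simp [layeredGraph]

@[simp] lemma not_layeredGraph_adj_inr_inl_inr_inl {b b' : β} :
    ¬ (layeredGraph r (γ := γ)).Adj (.inr (.inl b)) (.inr (.inl b')) := by
  simp [layeredGraph]

@[simp] lemma layeredGraph_adj_inr_inl_inr_inr {b : β} {c : γ} :
    (layeredGraph r).Adj (.inr (.inl b)) (.inr (.inr c)) := by
  simp [layeredGraph]

@[simp] lemma not_layeredGraph_adj_inr_inr_inr_inr {c c' : γ} :
    ¬ (layeredGraph r (β := β)).Adj (.inr (.inr c)) (.inr (.inr c')) := by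
  simp [layeredGraph]

variable (r)

lemma layeredGraph_neighborSet_inl (a : α) :
    (layeredGraph r (γ := γ)).neighborSet (.inl a) = (Sum.inr ∘ Sum.inl) '' {b | r a b} := by
  ext (a' | b | c) <;> simp

lemma layeredGraph_neighborSet_inr_inl_inter_range_inl (b : β) :
    (layeredGraph r (γ := γ)).neighborSet (.inr (.inl b)) ∩ Set.range Sum.inl =
      Sum.inl '' {a | r a b} := by
  ext (a | b' | c) <;> simp

end LayeredGraph

open Finset Function in
theorem isLowerBoundGraph_layeredGraph {α β γ : Type} [Fintype α] [Fintype β] [Fintype γ]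
    [DecidableEq α] [DecidableEq β] [DecidableEq γ] {d n : ℕ} (r : α → β → Prop)
    (hα : Fintype.card α = n) (hβ : Fintype.card β = ⌈√(d : ℝ)⌉₊ * n)
    (hγ : Fintype.card γ = d) (hleft : ∀ a, {b | r a b}.ncard = d)
    (hright : ∀ b, {a | r a b}.ncard ≤ ⌈√(d : ℝ)⌉₊) :
    IsLowerBoundGraph d n (layeredGraph r) ((univ : Finset α).map Embedding.inl)
      ((univ : Finset β).map (Embedding.inl.trans Embedding.inr))
      ((univ : Finset γ).map (Embedding.inr.trans Embedding.inr)) := by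
  refine ⟨?_, ?_, ?_, ?_, ?_, ?_, ?_, ?_, ?_, ?_, ?_, ?_, ?_, ?_⟩ <;>
    simp [disjoint_left, hα, hβ, hγ]
  · ext (a | b | c) <;> simp
  · intro a
    rw [layeredGraph_neighborSet_inl, Set.ncard_image_of_injective _
      (Sum.inr_injective.comp Sum.inl_injective)]
    exact ⟨hleft a, Set.image_subset_range _ _⟩
  · intro b
    rw [layeredGraph_neighborSet_inr_inl_inter_range_inl,
      Set.ncard_image_of_injective _ Sum.inl_injective]
    exact hright b

/-- For `1 ≤ d ≤ n` such a graph exists, and any such graph has minimum degree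
exactly `d`. -/
theorem lower_bound_graph_exists_and_min_degree (d n : ℕ) (hd : 1 ≤ d) (hn : d ≤ n) :
    (∃ (V : Type) (_ : Fintype V) (_ : DecidableEq V) (G : SimpleGraph V) (A B C : Finset V),
      IsLowerBoundGraph d n G A B C) ∧
    (∀ (V : Type) [Fintype V] [DecidableEq V] (G : SimpleGraph V) (A B C : Finset V),
      IsLowerBoundGraph d n G A B C →
        (∀ v : V, d ≤ (G.neighborSet v).ncard) ∧
        (∃ v : V, (G.neighborSet v).ncard = d)) := by
  refine ⟨?_, fun V _ _ G A B C hG =>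
    ⟨hG.le_ncard_neighborSet hn, hG.exists_ncard_neighborSet_eq (by omega)⟩⟩
  set s := ⌈√(d : ℝ)⌉₊
  have hdm : d ≤ s * n := le_ceil_sqrt_mul hn
  have hnd : n * d ≤ s * (s * n) :=
    calc n * d ≤ n * (s * s) := Nat.mul_le_mul_left n (le_ceil_sqrt_mul_self d)
      _ = s * (s * n) := by ring
  exact ⟨_, _, _, _, _, _, _, isLowerBoundGraph_layeredGraph
    (fun (a : Fin n) (b : Fin (s * n)) => wrapAdj d (s * n) a b)
    (Fintype.card_fin n) (Fintype.card_fin _) (Fintype.card_fin d)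
    (fun a => ncard_wrapAdj_left hd hdm a) (fun b => ncard_wrapAdj_right_le hd hnd b)⟩
end

section
/- Let d ≥ 1 and n be integers with 2n > d·⌈√d⌉·(⌈√d⌉ + 2), and let G be a graph whose vertex set is partitioned into sets A, B, C with |A| = n, |B| = ⌈√d⌉·n and |C| = d such that: A, B and C are each independent sets; every vertex of A has all of its neighbours in B; every vertex of B has at most ⌈√d⌉ neighbours in A; every vertex of C has all of its neighbours in B; and there are no edges between A and C. Then G contains no S_ℓ-factor for any integer ℓ ≥ ⌈√d⌉ + 2. -/
open Finset

namespace IsStarPacking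

variable {V : Type*} {G : SimpleGraph V} {ℓ : ℕ} {P : Finset (V × Finset V)}

theorem adj (hP : IsStarPacking G ℓ P) {p : V × Finset V} (hp : p ∈ P) {x : V}
    (hx : x ∈ p.2) : G.Adj p.1 x :=
  (hP.1 p hp).2.2 x hx

theorem le_card_leaves (hP : IsStarPacking G ℓ P) {p : V × Finset V} (hp : p ∈ P) :
    ℓ ≤ #p.2 :=
  (hP.1 p hp).1

theorem disjoint_leaves (hP : IsStarPacking G ℓ P) {p q : V × Finset V} (hp : p ∈ P)
    (hq : q ∈ P) (hpq : p ≠ q) : Disjoint p.2 q.2 := by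
  rw [← Finset.disjoint_coe]
  exact (hP.2 p hp q hq hpq).mono (Set.subset_insert _ _) (Set.subset_insert _ _)

theorem leaves_subset (hP : IsStarPacking G ℓ P) {p : V × Finset V} (hp : p ∈ P)
    {S : Finset V} (hS : G.neighborSet p.1 ⊆ ↑S) : p.2 ⊆ S :=
  fun _ hx => mem_coe.mp (hS (hP.adj hp hx))

variable [DecidableEq V]

theorem card_leaves_inter_le (hP : IsStarPacking G ℓ P) {p : V × Finset V} (hp : p ∈ P)
    {S : Finset V} {k : ℕ} (hk : (G.neighborSet p.1 ∩ ↑S).ncard ≤ k) : #(p.2 ∩ S) ≤ k := by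
  have hsub : (↑(p.2 ∩ S) : Set V) ⊆ G.neighborSet p.1 ∩ ↑S := fun x hx => by
    rw [coe_inter] at hx
    exact ⟨hP.adj hp hx.1, hx.2⟩
  rw [← Set.ncard_coe_finset]
  exact (Set.ncard_le_ncard hsub (Set.toFinite _)).trans hk

theorem sum_card_leaves_inter_le (hP : IsStarPacking G ℓ P) (S : Finset V) :
    ∑ p ∈ P, #(p.2 ∩ S) ≤ #S := by
  rw [← card_biUnion fun p hp q hq hpq =>
    (hP.disjoint_leaves hp hq hpq).mono inter_subset_left inter_subset_left]
  exact card_le_card (biUnion_subset.mpr fun _ _ => inter_subset_right)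

theorem card_filter_mul_le (hP : IsStarPacking G ℓ P) {S T : Finset V} {k : ℕ}
    (hk : ∀ p ∈ P, p.1 ∈ S → k ≤ #(p.2 ∩ T)) : #(P.filter (·.1 ∈ S)) * k ≤ #T :=
  calc #(P.filter (·.1 ∈ S)) * k = ∑ _p ∈ P.filter (·.1 ∈ S), k := by
        rw [sum_const, smul_eq_mul]
    _ ≤ ∑ p ∈ P.filter (·.1 ∈ S), #(p.2 ∩ T) :=
        sum_le_sum fun p hp => hk p (mem_filter.mp hp).1 (mem_filter.mp hp).2
    _ ≤ ∑ p ∈ P, #(p.2 ∩ T) := sum_le_sum_of_subset (filter_subset _ _)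
    _ ≤ #T := hP.sum_card_leaves_inter_le T

theorem card_filter_mul_le_of_neighborSet_subset (hP : IsStarPacking G ℓ P)
    {S T : Finset V} (hS : ∀ v ∈ S, G.neighborSet v ⊆ ↑T) :
    #(P.filter (·.1 ∈ S)) * ℓ ≤ #T :=
  hP.card_filter_mul_le fun p hp hpS => by
    rw [inter_eq_left.mpr (hP.leaves_subset hp (hS p.1 hpS))]
    exact hP.le_card_leaves hp

theorem card_filter_mul_sub_le (hP : IsStarPacking G ℓ P) {S T U : Finset V} {k : ℕ}
    (hT : ∀ v ∈ S, (G.neighborSet v ∩ ↑T).ncard ≤ k)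
    (hS : ∀ v ∈ S, G.neighborSet v ⊆ ↑(T ∪ U)) :
    #(P.filter (·.1 ∈ S)) * (ℓ - k) ≤ #U :=
  hP.card_filter_mul_le fun p hp hpS => by
    have hsplit : #p.2 ≤ #(p.2 ∩ T) + #(p.2 ∩ U) :=
      calc #p.2 = #(p.2 ∩ (T ∪ U)) := by
            rw [inter_eq_left.mpr (hP.leaves_subset hp (hS p.1 hpS))]
        _ = #(p.2 ∩ T ∪ p.2 ∩ U) := by rw [inter_union_distrib_left]
        _ ≤ #(p.2 ∩ T) + #(p.2 ∩ U) := card_union_le _ _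
    have := hP.le_card_leaves hp
    have := hP.card_leaves_inter_le hp (hT p.1 hpS)
    omega

theorem card_le_of_packingCovers (hP : IsStarPacking G ℓ P) {A B : Finset V} {k : ℕ}
    (hcov : PackingCovers P ↑A) (hA : ∀ a ∈ A, G.neighborSet a ⊆ ↑B)
    (hB : ∀ b ∈ B, (G.neighborSet b ∩ ↑A).ncard ≤ k) :
    #A ≤ #(P.filter (·.1 ∈ A)) + k * #(P.filter (·.1 ∈ B)) := by
  set PA := P.filter (·.1 ∈ A)
  set PB := P.filter (·.1 ∈ B)
  have hsub : A ⊆ PA.image Prod.fst ∪ PB.biUnion (·.2 ∩ A) := by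
    intro a ha
    obtain ⟨p, hp, rfl | hleaf⟩ := hcov a ha
    · exact mem_union_left _ (mem_image_of_mem _ (mem_filter.mpr ⟨hp, ha⟩))
    · have hpB : p.1 ∈ B := mem_coe.mp (hA a ha (hP.adj hp hleaf).symm)
      exact mem_union_right _
        (mem_biUnion.mpr ⟨p, mem_filter.mpr ⟨hp, hpB⟩, mem_inter.mpr ⟨hleaf, ha⟩⟩)
  calc #A ≤ #(PA.image Prod.fst ∪ PB.biUnion (·.2 ∩ A)) := card_le_card hsub
    _ ≤ #(PA.image Prod.fst) + #(PB.biUnion (·.2 ∩ A)) := card_union_le _ _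
    _ ≤ #PA + ∑ p ∈ PB, #(p.2 ∩ A) := add_le_add card_image_le card_biUnion_le
    _ ≤ #PA + ∑ _p ∈ PB, k := by
        gcongr with p hp
        exact hP.card_leaves_inter_le (mem_filter.mp hp).1 (hB _ (mem_filter.mp hp).2)
    _ = #PA + k * #PB := by rw [sum_const, smul_eq_mul, mul_comm]

end IsStarPacking

theorem two_mul_le_of_star_counts {n a b s d ℓ : ℕ} (hcover : n ≤ a + s * b)
    (ha : a * ℓ ≤ s * n) (hb : b * (ℓ - s) ≤ d) (hℓ : s + 2 ≤ ℓ) :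
    2 * n ≤ d * s * (s + 2) := by
  have ha' : a * (s + 2) ≤ s * n := le_trans (Nat.mul_le_mul_left a hℓ) ha
  have hb' : b * 2 ≤ d := le_trans (Nat.mul_le_mul_left b (by omega)) hb
  nlinarith [Nat.mul_le_mul_right (s + 2) hcover, Nat.mul_le_mul_right (s * (s + 2)) hb']

theorem no_star_factor_in_construction_general {V : Type*} [Fintype V] [DecidableEq V]
    (G : SimpleGraph V) (d n : ℕ)
    (hn : d * ⌈Real.sqrt d⌉₊ * (⌈Real.sqrt d⌉₊ + 2) < 2 * n)
    (A B C : Finset V)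
    (hunion : A ∪ B ∪ C = Finset.univ)
    (hcardA : A.card = n) (hcardB : B.card = ⌈Real.sqrt d⌉₊ * n) (hcardC : C.card = d)
    (hindB : ∀ v ∈ B, ∀ w ∈ B, ¬ G.Adj v w)
    (hAnbrs : ∀ a ∈ A, G.neighborSet a ⊆ ↑B)
    (hBdegA : ∀ b ∈ B, (G.neighborSet b ∩ ↑A).ncard ≤ ⌈Real.sqrt d⌉₊) :
    ∀ ℓ : ℕ, ⌈Real.sqrt d⌉₊ + 2 ≤ ℓ →
      ¬ ∃ P : Finset (V × Finset V), IsStarPacking G ℓ P ∧ PackingCovers P Set.univ := by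
  rintro ℓ hℓ ⟨P, hP, hcov⟩
  have hBnbrs : ∀ b ∈ B, G.neighborSet b ⊆ ↑(A ∪ C) := fun b hb x hbx => by
    have hx : x ∈ A ∪ B ∪ C := hunion ▸ mem_univ x
    have hxB : x ∉ B := fun hxB => hindB b hb x hxB hbx
    simp only [mem_union] at hx
    simp only [coe_union, Set.mem_union, mem_coe]
    tauto
  have hcoverA := hP.card_le_of_packingCovers (fun v _ => hcov v trivial) hAnbrs hBdegA
  have hstarsA := hP.card_filter_mul_le_of_neighborSet_subset hAnbrs
  have hstarsB := hP.card_filter_mul_sub_le hBdegA hBnbrs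
  rw [hcardA] at hcoverA
  rw [hcardB] at hstarsA
  rw [hcardC] at hstarsB
  exact hn.not_ge (two_mul_le_of_star_counts hcoverA hstarsA hstarsB hℓ)

/-- If `2n > d⌈√d⌉(⌈√d⌉ + 2)` and `G` is partitioned into independent sets `A`, `B`,
`C` with `|A| = n`, `|B| = ⌈√d⌉ n`, `|C| = d`, where all neighbours of `A`-vertices and
of `C`-vertices lie in `B`, every `B`-vertex has at most `⌈√d⌉` neighbours in `A`, and
there are no `A`–`C` edges, then `G` has no `S_ℓ`-factor for any `ℓ ≥ ⌈√d⌉ + 2`. -/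
theorem no_star_factor_in_construction {V : Type*} [Fintype V] [DecidableEq V]
    (G : SimpleGraph V) (d n : ℕ) (hd : 1 ≤ d)
    (hn : d * ⌈Real.sqrt d⌉₊ * (⌈Real.sqrt d⌉₊ + 2) < 2 * n)
    (A B C : Finset V)
    (hAB : Disjoint A B) (hAC : Disjoint A C) (hBC : Disjoint B C)
    (hunion : A ∪ B ∪ C = Finset.univ)
    (hcardA : A.card = n) (hcardB : B.card = ⌈Real.sqrt d⌉₊ * n) (hcardC : C.card = d)
    (hindA : ∀ v ∈ A, ∀ w ∈ A, ¬ G.Adj v w)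
    (hindB : ∀ v ∈ B, ∀ w ∈ B, ¬ G.Adj v w)
    (hindC : ∀ v ∈ C, ∀ w ∈ C, ¬ G.Adj v w)
    (hAnbrs : ∀ a ∈ A, G.neighborSet a ⊆ ↑B)
    (hBdegA : ∀ b ∈ B, (G.neighborSet b ∩ ↑A).ncard ≤ ⌈Real.sqrt d⌉₊)
    (hCnbrs : ∀ c ∈ C, G.neighborSet c ⊆ ↑B)
    (hACedges : ∀ a ∈ A, ∀ c ∈ C, ¬ G.Adj a c) :
    ∀ ℓ : ℕ, ⌈Real.sqrt d⌉₊ + 2 ≤ ℓ →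
      ¬ ∃ P : Finset (V × Finset V), IsStarPacking G ℓ P ∧ PackingCovers P Set.univ :=
  no_star_factor_in_construction_general G d n hn A B C hunion hcardA hcardB hcardC hindB hAnbrs
    hBdegA
end

section
/- There exists d₀ such that for every integer d ≥ d₀ the following holds. Let G be a graph with maximum degree at most d⁵ in which the set of vertices of degree greater than d is an independent set. Let U ⊆ V(G) and T ⊆ V(G) be sets such that every vertex of T has at least d^{3/4}·√(log d) neighbours in U. Then there exists a set V₁ ⊆ U such that every vertex of T has at least one neighbour in V₁, and every vertex v of G has at most max{d, deg(v)}·9·√(log d)/d^{3/4} neighbours in V₁. -/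
open Finset

set_option linter.unusedSectionVars false

namespace Prune

variable {V : Type} [Fintype V] [DecidableEq V]

/-- expectation of `f` over a random subset of `A`, each element kept with prob `p`. -/
noncomputable def EOn (p : ℝ) (A : Finset V) (f : Finset V → ℝ) : ℝ :=
  ∑ S ∈ A.powerset, p ^ S.card * (1 - p) ^ (A.card - S.card) * f S

noncomputable def Ex (p : ℝ) (f : Finset V → ℝ) : ℝ := EOn p Finset.univ f

/-- `f` depends only on coordinates in `A`. -/
def depOn (A : Finset V) (f : Finset V → ℝ) : Prop := ∀ S : Finset V, f S = f (S ∩ A)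

lemma depOn_mono {A B : Finset V} {f : Finset V → ℝ} (hAB : A ⊆ B) (h : depOn A f) :
    depOn B f := by
  intro S
  rw [h S, h (S ∩ B), inter_assoc, inter_eq_right.2 hAB]

lemma EOn_one (p : ℝ) (A : Finset V) : EOn p A (fun _ => 1) = 1 := by
  unfold EOn
  simp only [mul_one]
  rw [Finset.sum_pow_mul_eq_add_pow]
  norm_num

lemma sum_powerset_union {A B : Finset V} (h : Disjoint A B) (F : Finset V → ℝ) :
    ∑ S ∈ (A ∪ B).powerset, F S
      = ∑ S₁ ∈ A.powerset, ∑ S₂ ∈ B.powerset, F (S₁ ∪ S₂) := by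
  rw [← Finset.sum_product']
  apply Finset.sum_nbij' (i := fun S => (S ∩ A, S ∩ B)) (j := fun P => P.1 ∪ P.2)
  · intro S hS
    simp only [Finset.mem_product, mem_powerset]
    exact ⟨inter_subset_right, inter_subset_right⟩
  · intro P hP
    simp only [Finset.mem_product, mem_powerset] at hP ⊢
    exact union_subset_union hP.1 hP.2
  · intro S hS
    simp only [mem_powerset] at hS
    rw [← inter_union_distrib_left, inter_eq_left]
    exact hS
  · intro P hP
    simp only [Finset.mem_product, mem_powerset] at hP
    have h1 : (P.1 ∪ P.2) ∩ A = P.1 := by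
      rw [union_inter_distrib_right, inter_eq_left.2 hP.1,
        disjoint_iff_inter_eq_empty.1 (h.symm.mono_left hP.2), union_empty]
    have h2 : (P.1 ∪ P.2) ∩ B = P.2 := by
      rw [union_inter_distrib_right, inter_eq_left.2 hP.2,
        disjoint_iff_inter_eq_empty.1 (h.mono_left hP.1), empty_union]
    exact Prod.ext h1 h2
  · intro S hS
    simp only [mem_powerset] at hS
    rw [← inter_union_distrib_left, inter_eq_left.2 hS]

lemma EOn_mul_of_disjoint {p : ℝ} {A B : Finset V} (h : Disjoint A B)
    {f g : Finset V → ℝ} (hf : depOn A f) (hg : depOn B g) :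
    EOn p (A ∪ B) (fun S => f S * g S) = EOn p A f * EOn p B g := by
  unfold EOn
  rw [sum_powerset_union h, Finset.sum_mul_sum]
  apply Finset.sum_congr rfl
  intro S₁ hS₁
  apply Finset.sum_congr rfl
  intro S₂ hS₂
  simp only [mem_powerset] at hS₁ hS₂
  have hd : Disjoint S₁ S₂ := h.mono hS₁ hS₂
  have h1 : (S₁ ∪ S₂) ∩ A = S₁ := by
    rw [union_inter_distrib_right, inter_eq_left.2 hS₁,
      disjoint_iff_inter_eq_empty.1 (h.symm.mono_left hS₂), union_empty]
  have h2 : (S₁ ∪ S₂) ∩ B = S₂ := by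
    rw [union_inter_distrib_right, inter_eq_left.2 hS₂,
      disjoint_iff_inter_eq_empty.1 (h.mono_left hS₁), empty_union]
  have hfv : f (S₁ ∪ S₂) = f S₁ := by rw [hf (S₁ ∪ S₂), h1]
  have hgv : g (S₁ ∪ S₂) = g S₂ := by rw [hg (S₁ ∪ S₂), h2]
  have hcard : (S₁ ∪ S₂).card = S₁.card + S₂.card := card_union_of_disjoint hd
  have hcard2 : (A ∪ B).card - (S₁.card + S₂.card)
      = (A.card - S₁.card) + (B.card - S₂.card) := by
    rw [card_union_of_disjoint h]
    have := card_le_card hS₁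
    have := card_le_card hS₂
    omega
  simp only [hfv, hgv, hcard, hcard2, pow_add]
  ring

/-- independence: expectation of a product of functions on disjoint coordinate sets. -/
lemma Ex_mul_of_disjoint {p : ℝ} {A B : Finset V} (h : Disjoint A B)
    {f g : Finset V → ℝ} (hf : depOn A f) (hg : depOn B g) :
    Ex p (fun S => f S * g S) = Ex p f * Ex p g := by
  have hsplit : (Finset.univ : Finset V) = A ∪ (Finset.univ \ A) := by
    rw [union_sdiff_of_subset (subset_univ A)]
  have hdisj : Disjoint A (Finset.univ \ A) := disjoint_sdiff
  have hg' : depOn (Finset.univ \ A) g := by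
    apply depOn_mono _ hg
    intro b hb
    simp only [mem_sdiff, mem_univ, true_and]
    exact Finset.disjoint_right.1 h hb
  have key : ∀ f₁ g₁ : Finset V → ℝ, depOn A f₁ → depOn (Finset.univ \ A) g₁ →
      Ex p (fun S => f₁ S * g₁ S) = EOn p A f₁ * EOn p (Finset.univ \ A) g₁ := by
    intro f₁ g₁ h1 h2
    have grd : Ex p (fun S => f₁ S * g₁ S) = EOn p (A ∪ (Finset.univ \ A)) (fun S => f₁ S * g₁ S) := by
      rw [← hsplit]; rfl
    rw [grd]
    exact EOn_mul_of_disjoint hdisj h1 h2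
  have e1 : Ex p f = EOn p A f * 1 := by
    rw [← EOn_one p (Finset.univ \ A)]
    have := key f (fun _ => 1) hf (fun S => rfl)
    simpa using this
  have e2 : Ex p g = 1 * EOn p (Finset.univ \ A) g := by
    rw [← EOn_one p A]
    have := key (fun _ => 1) g (fun S => rfl) hg'
    simpa using this
  rw [key f g hf hg', e1, e2]
  ring

lemma Ex_nonneg {p : ℝ} (hp0 : 0 ≤ p) (hp1 : p ≤ 1) {f : Finset V → ℝ}
    (hf : ∀ S, 0 ≤ f S) : 0 ≤ Ex p f := by
  unfold Ex EOn
  apply Finset.sum_nonneg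
  intro S hS
  have h1 : (0:ℝ) ≤ 1 - p := by linarith
  exact mul_nonneg (mul_nonneg (pow_nonneg hp0 _) (pow_nonneg h1 _)) (hf S)

lemma Ex_mono {p : ℝ} (hp0 : 0 ≤ p) (hp1 : p ≤ 1) {f g : Finset V → ℝ}
    (hfg : ∀ S, f S ≤ g S) : Ex p f ≤ Ex p g := by
  unfold Ex EOn
  apply Finset.sum_le_sum
  intro S hS
  have h1 : (0:ℝ) ≤ 1 - p := by linarith
  have : (0:ℝ) ≤ p ^ S.card * (1 - p) ^ ((Finset.univ : Finset V).card - S.card) := by positivity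
  exact mul_le_mul_of_nonneg_left (hfg S) this

lemma Ex_pos_elim {p : ℝ} {f : Finset V → ℝ} (h : 0 < Ex p f) :
    ∃ S : Finset V, f S ≠ 0 := by
  by_contra hc
  push_neg at hc
  have : Ex p f = 0 := by
    unfold Ex EOn
    apply Finset.sum_eq_zero
    intro S hS
    rw [hc S, mul_zero]
  rw [this] at h
  exact lt_irrefl _ h


/-- indicator of membership -/
noncomputable def chi (u : V) (S : Finset V) : ℝ := if u ∈ S then 1 else 0

lemma chi_depOn (u : V) : depOn {u} (chi u) := by
  intro S
  unfold chi
  simp [mem_inter]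

lemma Ex_eq_EOn {p : ℝ} {A : Finset V} {f : Finset V → ℝ} (hf : depOn A f) :
    Ex p f = EOn p A f := by
  have hdisj : Disjoint A (Finset.univ \ A) := disjoint_sdiff
  have hsplit : (Finset.univ : Finset V) = A ∪ (Finset.univ \ A) := by
    rw [union_sdiff_of_subset (subset_univ A)]
  have grd : Ex p f = EOn p (A ∪ (Finset.univ \ A)) f := by
    rw [← hsplit]; rfl
  have h1 : depOn (Finset.univ \ A) (fun _ => (1:ℝ)) := fun S => rfl
  have := EOn_mul_of_disjoint (p := p) hdisj hf h1
  simp only [mul_one, EOn_one] at this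
  rw [grd, this]

lemma Ex_single {p : ℝ} {u : V} {F : Finset V → ℝ} (hF : depOn {u} F) :
    Ex p F = (1 - p) * F ∅ + p * F {u} := by
  rw [Ex_eq_EOn hF]
  unfold EOn
  have hps : ({u} : Finset V).powerset = {∅, {u}} := by
    ext S
    simp [Finset.subset_singleton_iff]
  rw [hps, Finset.sum_pair (Ne.symm (Finset.singleton_ne_empty u))]
  simp [card_singleton]
  try ring

lemma depOn_prod {ι : Type*} {N : Finset ι} {A : Finset V} {F : ι → Finset V → ℝ}
    (hF : ∀ u ∈ N, depOn A (F u)) : depOn A (fun S => ∏ u ∈ N, F u S) := by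
  intro S
  exact Finset.prod_congr rfl fun u hu => hF u hu S

lemma Ex_prod {p : ℝ} {N : Finset V} {F : V → Finset V → ℝ}
    (hF : ∀ u ∈ N, depOn {u} (F u)) :
    Ex p (fun S => ∏ u ∈ N, F u S) = ∏ u ∈ N, Ex p (F u) := by
  classical
  induction N using Finset.induction_on with
  | empty => simp [Ex, EOn_one]
  | @insert a N' ha ih =>
    have hFa : depOn {a} (F a) := hF a (mem_insert_self a N')
    have hF' : ∀ u ∈ N', depOn {u} (F u) := fun u hu => hF u (mem_insert_of_mem hu)
    have hdep : depOn N' (fun S => ∏ u ∈ N', F u S) :=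
      depOn_prod fun u hu => depOn_mono (singleton_subset_iff.2 hu) (hF' u hu)
    have hdisj : Disjoint ({a} : Finset V) N' := by
      simp [Finset.disjoint_singleton_left, ha]
    have key := Ex_mul_of_disjoint (p := p) hdisj hFa hdep
    have e : Ex p (fun S => ∏ u ∈ insert a N', F u S)
        = Ex p (fun S => F a S * ∏ u ∈ N', F u S) := by
      congr 1
      funext S
      rw [Finset.prod_insert ha]
    rw [e, key, ih hF', Finset.prod_insert ha]

lemma Ex_miss {p : ℝ} (C : Finset V) :
    Ex p (fun S => ∏ u ∈ C, (1 - chi u S)) = (1 - p) ^ C.card := by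
  have hdep : ∀ u ∈ C, depOn {u} (fun S => 1 - chi u S) := by
    intro u _ S
    show 1 - chi u S = 1 - chi u (S ∩ {u})
    rw [chi_depOn u S]
  rw [Ex_prod hdep]
  have hval : ∀ u ∈ C, Ex p (fun S => 1 - chi u S) = 1 - p := by
    intro u hu
    rw [Ex_single (hdep u hu)]
    simp [chi]
  rw [Finset.prod_congr rfl hval, Finset.prod_const]

lemma Ex_mgf {p lam : ℝ} (C : Finset V) :
    Ex p (fun S => ∏ u ∈ C, Real.exp (lam * chi u S))
      = (1 - p + p * Real.exp lam) ^ C.card := by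
  have hdep : ∀ u ∈ C, depOn {u} (fun S => Real.exp (lam * chi u S)) := by
    intro u _ S
    show Real.exp (lam * chi u S) = Real.exp (lam * chi u (S ∩ {u}))
    rw [chi_depOn u S]
  rw [Ex_prod hdep]
  have hval : ∀ u ∈ C, Ex p (fun S => Real.exp (lam * chi u S)) = 1 - p + p * Real.exp lam := by
    intro u hu
    rw [Ex_single (hdep u hu)]
    simp [chi]
    try ring
  rw [Finset.prod_congr rfl hval, Finset.prod_const]

lemma sum_chi (C S : Finset V) : ∑ u ∈ C, chi u S = ((S ∩ C).card : ℝ) := by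
  unfold chi
  rw [Finset.sum_boole]
  congr 1
  rw [Finset.filter_mem_eq_inter, inter_comm]

/-- Chernoff-type upper tail bound. -/
lemma chernoff {p lam : ℝ} (hp0 : 0 ≤ p) (hp1 : p ≤ 1) (hlam : 0 ≤ lam)
    (C : Finset V) (a : ℝ) :
    Ex p (fun S => if a < ((S ∩ C).card : ℝ) then (1:ℝ) else 0)
      ≤ Real.exp (-lam * a + C.card * p * (Real.exp lam - 1)) := by
  have step1 : Ex p (fun S => if a < ((S ∩ C).card : ℝ) then (1:ℝ) else 0)
      ≤ Ex p (fun S => Real.exp (-lam * a) * ∏ u ∈ C, Real.exp (lam * chi u S)) := by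
    apply Ex_mono hp0 hp1
    intro S
    have hprod : ∏ u ∈ C, Real.exp (lam * chi u S)
        = Real.exp (lam * ((S ∩ C).card : ℝ)) := by
      rw [← Real.exp_sum]
      congr 1
      rw [← Finset.mul_sum, sum_chi]
    rw [hprod, ← Real.exp_add]
    by_cases h : a < ((S ∩ C).card : ℝ)
    · rw [if_pos h]
      apply Real.one_le_exp
      nlinarith
    · rw [if_neg h]
      positivity
  have step2 : Ex p (fun S => Real.exp (-lam * a) * ∏ u ∈ C, Real.exp (lam * chi u S))
      = Real.exp (-lam * a) * (1 - p + p * Real.exp lam) ^ C.card := by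
    have : Ex p (fun S => Real.exp (-lam * a) * ∏ u ∈ C, Real.exp (lam * chi u S))
        = Real.exp (-lam * a) * Ex p (fun S => ∏ u ∈ C, Real.exp (lam * chi u S)) := by
      unfold Ex EOn
      rw [Finset.mul_sum]
      apply Finset.sum_congr rfl
      intro S _
      ring
    rw [this, Ex_mgf]
  calc Ex p (fun S => if a < ((S ∩ C).card : ℝ) then (1:ℝ) else 0)
      ≤ Real.exp (-lam * a) * (1 - p + p * Real.exp lam) ^ C.card := by
        rw [← step2]; exact step1
    _ ≤ Real.exp (-lam * a) * Real.exp (p * (Real.exp lam - 1)) ^ C.card := by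
        apply mul_le_mul_of_nonneg_left _ (Real.exp_nonneg _)
        apply pow_le_pow_left₀
        · nlinarith [Real.exp_pos lam, Real.add_one_le_exp lam]
        · have := Real.add_one_le_exp (p * (Real.exp lam - 1))
          linarith
        -- done?
    _ = Real.exp (-lam * a + C.card * p * (Real.exp lam - 1)) := by
        rw [← Real.exp_nat_mul, ← Real.exp_add]
        ring_nf


lemma Ex_sub {p : ℝ} (f g : Finset V → ℝ) :
    Ex p (fun S => f S - g S) = Ex p f - Ex p g := by
  unfold Ex EOn
  rw [← Finset.sum_sub_distrib]
  apply Finset.sum_congr rfl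
  intro S _
  ring

section LLL

variable {ι : Type} [DecidableEq ι] {p x : ℝ} {Δ : ℕ}
variable {I : Finset ι} {vbl : ι → Finset V} {b : ι → Finset V → ℝ}

/-- product of complements of the bad-event indicators over `J`. -/
noncomputable def NB (b : ι → Finset V → ℝ) (J : Finset ι) (S : Finset V) : ℝ :=
  ∏ j ∈ J, (1 - b j S)

variable (hp0 : 0 ≤ p) (hp1 : p ≤ 1) (hx0 : 0 ≤ x) (hx1 : x < 1)
  (hval : ∀ i ∈ I, ∀ S, b i S = 0 ∨ b i S = 1)
  (hdep : ∀ i ∈ I, depOn (vbl i) (b i))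
  (hq : ∀ i ∈ I, Ex p (b i) ≤ x * (1 - x) ^ Δ)
  (hΓ : ∀ i ∈ I, (I.filter fun j => ¬ Disjoint (vbl i) (vbl j)).card ≤ Δ)

section
include hval

lemma NB_mem01 {J : Finset ι} (hJ : J ⊆ I) (S : Finset V) :
    0 ≤ NB b J S ∧ NB b J S ≤ 1 := by
  constructor
  · apply Finset.prod_nonneg
    intro j hj
    rcases hval j (hJ hj) S with h | h <;> rw [h] <;> norm_num
  · apply Finset.prod_le_one
    · intro j hj
      rcases hval j (hJ hj) S with h | h <;> rw [h] <;> norm_num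
    · intro j hj
      rcases hval j (hJ hj) S with h | h <;> rw [h] <;> norm_num

lemma NB_mono {J' J : Finset ι} (hJ : J ⊆ I) (hJ' : J' ⊆ J) (S : Finset V) :
    NB b J S ≤ NB b J' S := by
  have hsplit : NB b J S = NB b J' S * NB b (J \ J') S := by
    unfold NB
    rw [← Finset.prod_union disjoint_sdiff]
    rw [Finset.union_sdiff_of_subset hJ']
  rw [hsplit]
  have h1 := NB_mem01 hval (hJ'.trans hJ) S
  have h2 := NB_mem01 (J := J \ J') hval ((sdiff_subset).trans hJ) S
  nlinarith [h1.1, h1.2, h2.1, h2.2]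

end

include hp0 hp1 hx0 hx1 hval hdep hq hΓ in
/-- Main inductive claim of the local lemma. -/
lemma lll_main : ∀ n : ℕ, ∀ J ⊆ I, J.card ≤ n → ∀ i ∈ I,
    Ex p (fun S => b i S * NB b J S) ≤ x * Ex p (NB b J) := by
  intro n
  induction n with
  | zero =>
    intro J hJ hcard i hi
    have hJe : J = ∅ := Finset.card_eq_zero.1 (Nat.le_zero.1 hcard)
    subst hJe
    have h1 : ∀ S : Finset V, NB b ∅ S = 1 := by intro S; simp [NB]
    have e1 : Ex p (fun S => b i S * NB b ∅ S) = Ex p (b i) := by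
      congr 1; funext S; rw [h1 S, mul_one]
    have e2 : Ex p (NB b ∅) = 1 := by
      have : NB b (∅ : Finset ι) = fun _ => (1:ℝ) := by funext S; exact h1 S
      rw [this, Ex, EOn_one]
    rw [e1, e2, mul_one]
    calc Ex p (b i) ≤ x * (1 - x) ^ Δ := hq i hi
      _ ≤ x * 1 := by
          apply mul_le_mul_of_nonneg_left _ hx0
          apply pow_le_one₀ (by linarith) (by linarith)
      _ = x := mul_one x
  | succ n ih =>
    intro J hJ hcard i hi
    set J₁ : Finset ι := J.filter (fun j => ¬ Disjoint (vbl i) (vbl j)) with hJ₁def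
    set J₂ : Finset ι := J \ J₁ with hJ₂def
    have hJ₁J : J₁ ⊆ J := Finset.filter_subset _ _
    have hJ₂J : J₂ ⊆ J := sdiff_subset
    have hJ₂I : J₂ ⊆ I := hJ₂J.trans hJ
    have hdisjvbl : ∀ j ∈ J₂, Disjoint (vbl i) (vbl j) := by
      intro j hj
      rw [hJ₂def, hJ₁def] at hj
      simp only [Finset.mem_sdiff, Finset.mem_filter, not_and, not_not] at hj
      exact hj.2 hj.1
    -- peeling
    have peel : ∀ K, K ⊆ J₁ → (1 - x) ^ K.card * Ex p (NB b J₂) ≤ Ex p (NB b (J₂ ∪ K)) := by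
      intro K
      induction K using Finset.induction_on with
      | empty => intro _; simp
      | @insert j K' hjK' ihK =>
        intro hins
        have hjJ₁ : j ∈ J₁ := hins (mem_insert_self j K')
        have hjJ : j ∈ J := hJ₁J hjJ₁
        have hK'sub : K' ⊆ J₁ := (Finset.subset_insert j K').trans hins
        have hjnotin : j ∉ J₂ ∪ K' := by
          rw [Finset.mem_union]
          rintro (h | h)
          · rw [hJ₂def, Finset.mem_sdiff] at h
            exact h.2 hjJ₁
          · exact hjK' h
        have hsub : J₂ ∪ K' ⊆ J := Finset.union_subset hJ₂J (hK'sub.trans hJ₁J)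
        have hsubI : J₂ ∪ K' ⊆ I := hsub.trans hJ
        have hsuberase : J₂ ∪ K' ⊆ J.erase j := (Finset.subset_erase).2 ⟨hsub, hjnotin⟩
        have hcard' : (J₂ ∪ K').card ≤ n := by
          have h1 := Finset.card_le_card hsuberase
          rw [Finset.card_erase_of_mem hjJ] at h1
          have h2 : 1 ≤ J.card := Finset.card_pos.2 ⟨j, hjJ⟩
          omega
        have hsetsplit : J₂ ∪ insert j K' = insert j (J₂ ∪ K') := by
          ext y; simp only [Finset.mem_union, Finset.mem_insert]; tauto
        have hsplitEx : Ex p (NB b (J₂ ∪ insert j K'))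
            = Ex p (NB b (J₂ ∪ K')) - Ex p (fun S => b j S * NB b (J₂ ∪ K') S) := by
          rw [← Ex_sub]
          congr 1
          funext S
          rw [hsetsplit]
          unfold NB
          rw [Finset.prod_insert hjnotin]
          ring
        have hih := ihK hK'sub
        have happ := ih (J₂ ∪ K') hsubI hcard' j (hJ hjJ)
        have hx1' : (0:ℝ) ≤ 1 - x := by linarith
        calc (1 - x) ^ (insert j K').card * Ex p (NB b J₂)
            = (1 - x) * ((1 - x) ^ K'.card * Ex p (NB b J₂)) := by
              rw [Finset.card_insert_of_notMem hjK', pow_succ]; ring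
          _ ≤ (1 - x) * Ex p (NB b (J₂ ∪ K')) := mul_le_mul_of_nonneg_left hih hx1'
          _ ≤ Ex p (NB b (J₂ ∪ K')) - Ex p (fun S => b j S * NB b (J₂ ∪ K') S) := by
              nlinarith [happ]
          _ = Ex p (NB b (J₂ ∪ insert j K')) := hsplitEx.symm
    -- independence part
    have hNBdep : depOn (Finset.univ \ vbl i) (NB b J₂) := by
      apply depOn_prod
      intro j hj
      have hsub : vbl j ⊆ Finset.univ \ vbl i := by
        intro u hu
        simp only [mem_sdiff, mem_univ, true_and]
        exact fun hvi => (Finset.disjoint_left.1 (hdisjvbl j hj) hvi) hu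
      have hbdep : depOn (Finset.univ \ vbl i) (b j) := depOn_mono hsub (hdep j (hJ₂I hj))
      intro S
      show 1 - b j S = 1 - b j (S ∩ (Finset.univ \ vbl i))
      rw [hbdep S]
    have hfact : Ex p (fun S => b i S * NB b J₂ S) = Ex p (b i) * Ex p (NB b J₂) :=
      Ex_mul_of_disjoint disjoint_sdiff (hdep i hi) hNBdep
    have hNB2nonneg : 0 ≤ Ex p (NB b J₂) :=
      Ex_nonneg hp0 hp1 (fun S => (NB_mem01 hval hJ₂I S).1)
    have step1 : Ex p (fun S => b i S * NB b J S) ≤ Ex p (fun S => b i S * NB b J₂ S) := by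
      apply Ex_mono hp0 hp1
      intro S
      have hb : 0 ≤ b i S := by
        rcases hval i hi S with h | h <;> rw [h] <;> norm_num
      exact mul_le_mul_of_nonneg_left (NB_mono hval hJ hJ₂J S) hb
    have hcard₁ : J₁.card ≤ Δ := by
      apply le_trans _ (hΓ i hi)
      apply Finset.card_le_card
      rw [hJ₁def]
      exact Finset.monotone_filter_left _ hJ
    have step2 : Ex p (b i) ≤ x * (1 - x) ^ J₁.card := by
      calc Ex p (b i) ≤ x * (1 - x) ^ Δ := hq i hi
        _ ≤ x * (1 - x) ^ J₁.card := by
            apply mul_le_mul_of_nonneg_left _ hx0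
            exact pow_le_pow_of_le_one (by linarith) (by linarith) hcard₁
    have hJsplit : J₂ ∪ J₁ = J := by
      rw [hJ₂def]
      exact Finset.sdiff_union_of_subset hJ₁J
    have final : Ex p (fun S => b i S * NB b J S) ≤ x * Ex p (NB b J) := by
      have hpeel := peel J₁ (Finset.Subset.refl J₁)
      rw [hJsplit] at hpeel
      calc Ex p (fun S => b i S * NB b J S)
          ≤ Ex p (b i) * Ex p (NB b J₂) := by rw [← hfact]; exact step1
        _ ≤ (x * (1 - x) ^ J₁.card) * Ex p (NB b J₂) :=
            mul_le_mul_of_nonneg_right step2 hNB2nonneg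
        _ = x * ((1 - x) ^ J₁.card * Ex p (NB b J₂)) := by ring
        _ ≤ x * Ex p (NB b J) := mul_le_mul_of_nonneg_left hpeel hx0
    exact final


include hp0 hp1 hx0 hx1 hval hdep hq hΓ in
lemma lll_pos : ∀ n : ℕ, ∀ J ⊆ I, J.card ≤ n → (1 - x) ^ J.card ≤ Ex p (NB b J) := by
  intro n
  induction n with
  | zero =>
    intro J hJ hcard
    have hJe : J = ∅ := Finset.card_eq_zero.1 (Nat.le_zero.1 hcard)
    subst hJe
    have : NB b (∅ : Finset ι) = fun _ => (1:ℝ) := by funext S; simp [NB]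
    rw [this, Ex, EOn_one]
    simp
  | succ n ih =>
    intro J hJ hcard
    rcases Finset.eq_empty_or_nonempty J with hJe | ⟨j, hjJ⟩
    · subst hJe
      have : NB b (∅ : Finset ι) = fun _ => (1:ℝ) := by funext S; simp [NB]
      rw [this, Ex, EOn_one]
      simp
    · have hjI : j ∈ I := hJ hjJ
      have hins : J = insert j (J.erase j) := (Finset.insert_erase hjJ).symm
      have hjne : j ∉ J.erase j := Finset.notMem_erase j J
      have herasesub : J.erase j ⊆ I := (Finset.erase_subset j J).trans hJ
      have hcarde : (J.erase j).card ≤ n := by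
        rw [Finset.card_erase_of_mem hjJ]
        have : 1 ≤ J.card := Finset.card_pos.2 ⟨j, hjJ⟩
        omega
      have hsplitEx : Ex p (NB b J)
          = Ex p (NB b (J.erase j)) - Ex p (fun S => b j S * NB b (J.erase j) S) := by
        rw [← Ex_sub]
        congr 1
        funext S
        unfold NB
        rw [← Finset.mul_prod_erase _ _ hjJ]
        ring
      have happ := lll_main hp0 hp1 hx0 hx1 hval hdep hq hΓ n (J.erase j) herasesub hcarde j hjI
      have hih := ih (J.erase j) herasesub hcarde
      have hx1' : (0:ℝ) ≤ 1 - x := by linarith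
      have hcardJ : J.card = (J.erase j).card + 1 := by
        rw [Finset.card_erase_of_mem hjJ]
        have : 1 ≤ J.card := Finset.card_pos.2 ⟨j, hjJ⟩
        omega
      calc (1 - x) ^ J.card = (1 - x) * (1 - x) ^ (J.erase j).card := by
            rw [hcardJ, pow_succ]; ring
        _ ≤ (1 - x) * Ex p (NB b (J.erase j)) := mul_le_mul_of_nonneg_left hih hx1'
        _ ≤ Ex p (NB b (J.erase j)) - Ex p (fun S => b j S * NB b (J.erase j) S) := by
            nlinarith [happ]
        _ = Ex p (NB b J) := hsplitEx.symm

include hp0 hp1 hx0 hx1 hval hdep hq hΓ in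
/-- Lovász Local Lemma: there is an outcome avoiding all bad events. -/
lemma lll_exists : ∃ S : Finset V, ∀ i ∈ I, b i S = 0 := by
  have hpos : 0 < Ex p (NB b I) := by
    calc (0:ℝ) < (1 - x) ^ I.card := pow_pos (by linarith) _
      _ ≤ Ex p (NB b I) :=
        lll_pos hp0 hp1 hx0 hx1 hval hdep hq hΓ I.card I (Finset.Subset.refl I) le_rfl
  obtain ⟨S, hS⟩ := Ex_pos_elim hpos
  refine ⟨S, fun i hi => ?_⟩
  have hne : (1 - b i S) ≠ 0 := by
    intro h0
    apply hS
    unfold NB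
    exact Finset.prod_eq_zero hi h0
  rcases hval i hi S with h | h
  · exact h
  · exfalso; apply hne; rw [h]; ring

end LLL



lemma exp_quarter_le : Real.exp ((1:ℝ)/4) ≤ 21/16 := by
  have h4 : Real.exp ((1:ℝ)/4) ^ (4:ℕ) = Real.exp 1 := by
    rw [← Real.exp_nat_mul]; norm_num
  have h1 : Real.exp 1 < 2.7182818286 := Real.exp_one_lt_d9
  nlinarith [Real.exp_pos ((1:ℝ)/4), h4, h1, sq_nonneg (Real.exp ((1:ℝ)/4) - 21/16),
    sq_nonneg (Real.exp ((1:ℝ)/4) + 21/16), sq_nonneg (Real.exp ((1:ℝ)/4) ^ 2 - (21/16)^2)]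

lemma prod_one_sub_chi_ne_zero {C S : Finset V} (h : ∏ u ∈ C, (1 - chi u S) ≠ 0) :
    ∀ u ∈ C, u ∉ S := by
  intro u hu huS
  apply h
  apply Finset.prod_eq_zero hu
  unfold chi
  rw [if_pos huS]
  ring

lemma prod_one_sub_chi_val (C S : Finset V) :
    (∏ u ∈ C, (1 - chi u S)) = 0 ∨ (∏ u ∈ C, (1 - chi u S)) = 1 := by
  by_cases h : ∃ u ∈ C, u ∈ S
  · obtain ⟨u, hu, huS⟩ := h
    left
    apply Finset.prod_eq_zero hu
    unfold chi
    rw [if_pos huS]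
    ring
  · push_neg at h
    right
    apply Finset.prod_eq_one
    intro u hu
    unfold chi
    rw [if_neg (h u hu)]
    ring

end Prune

open Prune Finset in
set_option maxHeartbeats 4000000 in
/-- For large `d`: if `G` has maximum degree at most `d⁵`, the vertices of degree
greater than `d` form an independent set, and every vertex of `T` has at least
`d^{3/4} √(log d)` neighbours in `U`, then there is `V₁ ⊆ U` dominating `T` such that
every vertex `v` has at most `max{d, deg(v)} · 9 √(log d) / d^{3/4}` neighbours
in `V₁`. -/
theorem prune_lemma :
    ∃ d₀ : ℕ, ∀ d : ℕ, d₀ ≤ d →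
      ∀ (V : Type) [Fintype V] [DecidableEq V] (G : SimpleGraph V) [DecidableRel G.Adj]
        (U T : Finset V),
        (∀ v : V, G.degree v ≤ d ^ 5) →
        (∀ v w : V, d < G.degree v → d < G.degree w → ¬ G.Adj v w) →
        (∀ t ∈ T, (d : ℝ) ^ ((3 : ℝ) / 4) * Real.sqrt (Real.log d) ≤
          ((U.filter (G.Adj t)).card : ℝ)) →
        ∃ V₁ : Finset V, V₁ ⊆ U ∧
          (∀ t ∈ T, ∃ v ∈ V₁, G.Adj t v) ∧
          (∀ v : V, ((V₁.filter (G.Adj v)).card : ℝ) ≤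
            (max d (G.degree v) : ℕ) * 9 * Real.sqrt (Real.log d) /
              (d : ℝ) ^ ((3 : ℝ) / 4)) := by
  refine ⟨288^8, ?_⟩
  intro d hd V _ _ G _ U T hdeg hind hT
  classical
  set n : ℝ := (d:ℝ) with hndef
  set L : ℝ := Real.log n with hLdef
  set R : ℝ := n ^ ((3:ℝ)/4) with hRdef
  -- basic numeric facts
  have hd' : (288:ℝ)^8 ≤ n := by
    rw [hndef]
    exact_mod_cast Nat.cast_le.2 hd
  have hn0 : (0:ℝ) < n := lt_of_lt_of_le (by norm_num) hd'
  have hn1 : (1:ℝ) ≤ n := le_trans (by norm_num) hd'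
  have hn8 : (8:ℝ) ≤ n := le_trans (by norm_num) hd'
  have hL0 : 0 ≤ L := Real.log_nonneg hn1
  have hL1 : 1 ≤ L := by
    have h3 : (3:ℝ) ≤ n := le_trans (by norm_num) hd'
    have hlog3 : (1:ℝ) ≤ Real.log 3 := by
      rw [Real.le_log_iff_exp_le (by norm_num : (0:ℝ) < 3)]
      have := Real.exp_one_lt_d9
      linarith
    calc (1:ℝ) ≤ Real.log 3 := hlog3
      _ ≤ L := Real.log_le_log (by norm_num) h3
  have hR0 : (0:ℝ) < R := Real.rpow_pos_of_pos hn0 _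
  set n18 : ℝ := n ^ ((1:ℝ)/8) with hn18def
  set n14 : ℝ := n ^ ((1:ℝ)/4) with hn14def
  have hn18pos : 0 < n18 := Real.rpow_pos_of_pos hn0 _
  have hn14pos : 0 < n14 := Real.rpow_pos_of_pos hn0 _
  have h288 : (288:ℝ) ≤ n18 := by
    have key : ((288:ℝ)^8) ^ ((1:ℝ)/8) = 288 := by
      rw [← Real.rpow_natCast (288:ℝ) 8, ← Real.rpow_mul (by norm_num : (0:ℝ) ≤ 288)]
      norm_num
    calc (288:ℝ) = ((288:ℝ)^8) ^ ((1:ℝ)/8) := key.symm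
      _ ≤ n ^ ((1:ℝ)/8) := Real.rpow_le_rpow (by positivity) hd' (by norm_num)
  have hn14eq : n18 ^ 2 = n14 := by
    rw [hn18def, hn14def, ← Real.rpow_natCast (n ^ ((1:ℝ)/8)) 2,
      ← Real.rpow_mul hn0.le]
    norm_num
  have hReq : n18 ^ 6 = R := by
    rw [hn18def, hRdef, ← Real.rpow_natCast (n ^ ((1:ℝ)/8)) 6, ← Real.rpow_mul hn0.le]
    norm_num
  have hneq : n18 ^ 8 = n := by
    rw [hn18def, ← Real.rpow_natCast (n ^ ((1:ℝ)/8)) 8, ← Real.rpow_mul hn0.le]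
    norm_num
  have hnR : R * n14 = n := by
    rw [hRdef, hn14def, ← Real.rpow_add hn0]
    norm_num
  have hL4 : L ≤ 4 * n14 := by
    have h14 : Real.log n14 = L/4 := by
      rw [hn14def, Real.log_rpow hn0]
      ring
    have h2 := Real.log_le_sub_one_of_pos hn14pos
    rw [h14] at h2
    linarith
  have hsqL : Real.sqrt L ≤ 2 * n18 := by
    have h1 : Real.sqrt L ≤ Real.sqrt (4 * n14) := Real.sqrt_le_sqrt hL4
    have h2 : Real.sqrt (4 * n14) = 2 * Real.sqrt n14 := by
      rw [show (4:ℝ) * n14 = (2 * Real.sqrt n14)^2 by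
        rw [mul_pow, Real.sq_sqrt hn14pos.le]; ring]
      rw [Real.sqrt_sq (by positivity)]
    have h3 : Real.sqrt n14 = n18 := by
      rw [← hn14eq, Real.sqrt_sq hn18pos.le]
    rw [h2, h3] at h1
    exact h1
  have hsq0 : 0 ≤ Real.sqrt L := Real.sqrt_nonneg _
  have hsq1 : 1 ≤ Real.sqrt L := by
    rw [show (1:ℝ) = Real.sqrt 1 by simp]
    exact Real.sqrt_le_sqrt hL1
  set p : ℝ := 7 * Real.sqrt L / R with hpdef
  have hp0 : 0 ≤ p := by positivity
  have hp1 : p ≤ 1 := by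
    rw [hpdef, div_le_one hR0]
    calc 7 * Real.sqrt L ≤ 7 * (2 * n18) := by linarith
      _ ≤ R := by
          rw [← hReq]
          have h1 : (1:ℝ) ≤ n18 := by linarith
          calc 7 * (2 * n18) = 14 * n18 := by ring
            _ ≤ n18 * n18 := by nlinarith
            _ = n18 ^ 2 := by ring
            _ ≤ n18 ^ 6 := pow_le_pow_right₀ h1 (by norm_num)
  set q0 : ℝ := 1 / (8 * n^6) with hq0def
  have hq0pos : 0 < q0 := by rw [hq0def]; positivity
  -- bound for the miss events
  have hq0A : Real.exp (-(7*L)) ≤ q0 := by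
    have h7 : Real.exp (7*L) = n^7 := by
      rw [show (7:ℝ)*L = ((7:ℕ):ℝ)*L by norm_num, Real.exp_nat_mul, hLdef,
        Real.exp_log hn0]
    rw [Real.exp_neg, h7, hq0def]
    rw [inv_eq_one_div, div_le_div_iff₀ (by positivity) (by positivity)]
    nlinarith [pow_pos hn0 6]
  -- bound for the degree events
  have hq0B : Real.exp (-(Real.sqrt L * n14)/16) ≤ q0 := by
    have key : Real.exp (Real.log 8 + 6*L) = 8 * n^6 := by
      rw [Real.exp_add, Real.exp_log (by norm_num : (0:ℝ) < 8),
        show (6:ℝ)*L = ((6:ℕ):ℝ)*L by norm_num, Real.exp_nat_mul, hLdef, Real.exp_log hn0]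
    have hlog8 : Real.log 8 ≤ 3 := by
      rw [show (8:ℝ) = 2^3 by norm_num, Real.log_pow]
      have := Real.log_two_lt_d9
      push_cast
      linarith
    have hexple : Real.log 8 + 6*L ≤ Real.sqrt L * n14 / 16 := by
      have hLs : Real.sqrt L * Real.sqrt L = L := Real.mul_self_sqrt hL0
      have h144 : 144 * Real.sqrt L ≤ n14 := by
        rw [← hn14eq]
        nlinarith [h288, hn18pos, hsqL]
      have h144L : 144 * L ≤ Real.sqrt L * n14 := by
        have h1 : Real.sqrt L * (144 * Real.sqrt L) ≤ Real.sqrt L * n14 :=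
          mul_le_mul_of_nonneg_left h144 hsq0
        nlinarith [h1, hLs]
      nlinarith [hL1]
    calc Real.exp (-(Real.sqrt L * n14)/16)
        ≤ Real.exp (-(Real.log 8 + 6*L)) := by
          apply Real.exp_le_exp.2
          linarith
      _ = q0 := by rw [Real.exp_neg, key, hq0def, inv_eq_one_div]
  -- the events
  set Δ : ℕ := 2 * d^6 with hΔdef
  set x : ℝ := 1 / (4 * n^6) with hxdef
  have hx0 : 0 ≤ x := by rw [hxdef]; positivity
  have hx1 : x < 1 := by
    rw [hxdef, div_lt_one (by positivity)]
    have h6 : (1:ℝ) ≤ n^6 := one_le_pow₀ hn1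
    linarith
  have hq0x : q0 ≤ x * (1-x)^Δ := by
    have hbern : 1 + (Δ:ℝ) * (-x) ≤ (1 + (-x))^Δ :=
      one_add_mul_le_pow (by linarith) Δ
    have hΔx : (Δ:ℝ) * x = 1/2 := by
      rw [hΔdef, hxdef]
      push_cast
      have : (n:ℝ)^6 ≠ 0 := by positivity
      field_simp
      ring
    have h2 : (1/2 : ℝ) ≤ (1-x)^Δ := by
      have : 1 + (Δ:ℝ) * (-x) = 1/2 := by
        have := hΔx
        nlinarith
      calc (1/2 : ℝ) = 1 + (Δ:ℝ) * (-x) := this.symm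
        _ ≤ (1 + (-x))^Δ := hbern
        _ = (1-x)^Δ := by ring_nf
    calc q0 = x * (1/2) := by
          rw [hq0def, hxdef]; ring
      _ ≤ x * (1-x)^Δ := mul_le_mul_of_nonneg_left h2 hx0
  -- index set and events
  set Nu : V → Finset V := fun a => U.filter (G.Adj a) with hNudef
  set cap : V → ℝ := fun v => ((max d (G.degree v) : ℕ) : ℝ) * 9 * Real.sqrt L / R
    with hcapdef
  set bb : V ⊕ V → Finset V → ℝ := fun i => match i with
    | Sum.inl t => fun S => ∏ u ∈ Nu t, (1 - chi u S)
    | Sum.inr v => fun S => if cap v < (((S ∩ Nu v).card : ℕ) : ℝ) then 1 else 0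
    with hbbdef
  set vbl : V ⊕ V → Finset V := fun i => match i with
    | Sum.inl t => Nu t
    | Sum.inr v => Nu v
    with hvbldef
  set I : Finset (V ⊕ V) := T.disjSum Finset.univ with hIdef
  -- two-valuedness
  have hval : ∀ i ∈ I, ∀ S : Finset V, bb i S = 0 ∨ bb i S = 1 := by
    rintro (t | v) _ S
    · exact prod_one_sub_chi_val (Nu t) S
    · by_cases h : cap v < (((S ∩ Nu v).card : ℕ) : ℝ)
      · right; simp only [hbbdef]; rw [if_pos h]
      · left; simp only [hbbdef]; rw [if_neg h]
  -- dependence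
  have hdep : ∀ i ∈ I, depOn (vbl i) (bb i) := by
    rintro (t | v) _
    · apply depOn_prod
      intro u hu
      have h1 : depOn {u} (fun S => 1 - chi u S) := by
        intro S
        show 1 - chi u S = 1 - chi u (S ∩ {u})
        rw [chi_depOn u S]
      exact depOn_mono (Finset.singleton_subset_iff.2 hu) h1
    · intro S
      show (if cap v < (((S ∩ Nu v).card : ℕ) : ℝ) then (1:ℝ) else 0)
        = (if cap v < ((((S ∩ Nu v) ∩ Nu v).card : ℕ) : ℝ) then (1:ℝ) else 0)
      rw [inter_assoc, inter_self]
  -- probability bounds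
  have hq : ∀ i ∈ I, Ex p (bb i) ≤ x * (1-x)^Δ := by
    rintro (t | v) hi
    · -- miss event
      have hmem : t ∈ T := by
        rw [hIdef] at hi
        exact (Finset.inl_mem_disjSum).1 hi
      have hEx : Ex p (bb (Sum.inl t)) = (1-p)^((Nu t).card) := Ex_miss (Nu t)
      have hTt := hT t hmem
      have hcard : R * Real.sqrt L ≤ ((Nu t).card : ℝ) := hTt
      have h1 : (1-p)^((Nu t).card) ≤ Real.exp (-p) ^ ((Nu t).card) := by
        apply pow_le_pow_left₀ (by linarith)
        linarith [Real.add_one_le_exp (-p)]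
      have h2 : Real.exp (-p) ^ ((Nu t).card) = Real.exp (-(((Nu t).card : ℝ) * p)) := by
        rw [← Real.exp_nat_mul]
        ring_nf
      have h3 : 7 * L ≤ ((Nu t).card : ℝ) * p := by
        have hRLp : (R * Real.sqrt L) * p = 7 * L := by
          rw [hpdef]
          have hRne : R ≠ 0 := ne_of_gt hR0
          field_simp
          nlinarith [Real.mul_self_sqrt hL0]
        calc 7 * L = (R * Real.sqrt L) * p := hRLp.symm
          _ ≤ ((Nu t).card : ℝ) * p := mul_le_mul_of_nonneg_right hcard hp0
      calc Ex p (bb (Sum.inl t)) = (1-p)^((Nu t).card) := hEx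
        _ ≤ Real.exp (-(((Nu t).card : ℝ) * p)) := by rw [← h2]; exact h1
        _ ≤ Real.exp (-(7*L)) := Real.exp_le_exp.2 (by linarith)
        _ ≤ q0 := hq0A
        _ ≤ x * (1-x)^Δ := hq0x
    · -- degree event
      have hch := chernoff (V := V) hp0 hp1 (by norm_num : (0:ℝ) ≤ 1/4) (Nu v) (cap v)
      have hMn : n ≤ ((max d (G.degree v) : ℕ) : ℝ) := by
        rw [hndef]
        exact_mod_cast Nat.cast_le.2 (le_max_left d (G.degree v))
      have hm'M : (((Nu v).card : ℕ) : ℝ) ≤ ((max d (G.degree v) : ℕ) : ℝ) := by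
        have hsub : Nu v ⊆ G.neighborFinset v := by
          intro u hu
          rw [SimpleGraph.mem_neighborFinset]
          rw [hNudef] at hu
          exact (Finset.mem_filter.1 hu).2
        have := Finset.card_le_card hsub
        rw [G.card_neighborFinset_eq_degree] at this
        exact_mod_cast le_trans this (le_max_right d (G.degree v))
      have hE1 : 1 ≤ Real.exp ((1:ℝ)/4) := Real.one_le_exp (by norm_num)
      have hE2 : Real.exp ((1:ℝ)/4) ≤ 21/16 := exp_quarter_le
      have hs0 : 0 ≤ Real.sqrt L / R := by positivity
      have hM0 : 0 ≤ ((max d (G.degree v) : ℕ) : ℝ) := by positivity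
      have hns : n * (Real.sqrt L / R) = Real.sqrt L * n14 := by
        rw [← hnR]
        field_simp
      have hexpo : -(1/4) * cap v + ((Nu v).card : ℝ) * p * (Real.exp ((1:ℝ)/4) - 1)
          ≤ -(Real.sqrt L * n14)/16 := by
        have hE1' : (0:ℝ) ≤ Real.exp ((1:ℝ)/4) - 1 := by linarith
        have h516 : Real.exp ((1:ℝ)/4) - 1 ≤ 5/16 := by linarith
        have step1 : (((Nu v).card : ℕ) : ℝ) * (Real.exp ((1:ℝ)/4) - 1)
            ≤ ((max d (G.degree v) : ℕ) : ℝ) * (5/16) := by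
          calc (((Nu v).card : ℕ) : ℝ) * (Real.exp ((1:ℝ)/4) - 1)
              ≤ ((max d (G.degree v) : ℕ) : ℝ) * (Real.exp ((1:ℝ)/4) - 1) :=
                mul_le_mul_of_nonneg_right hm'M hE1'
            _ ≤ ((max d (G.degree v) : ℕ) : ℝ) * (5/16) :=
                mul_le_mul_of_nonneg_left h516 hM0
        have step2 : -(9/4) * ((max d (G.degree v) : ℕ) : ℝ)
            + 7 * ((((Nu v).card : ℕ) : ℝ) * (Real.exp ((1:ℝ)/4) - 1)) ≤ -(1/16) * n := by
          linarith [step1, hMn]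
        have step3 := mul_le_mul_of_nonneg_right step2 hs0
        simp only [hcapdef, hpdef]
        calc -(1/4) * (((max d (G.degree v) : ℕ) : ℝ) * 9 * Real.sqrt L / R)
              + (((Nu v).card : ℕ) : ℝ) * (7 * Real.sqrt L / R) * (Real.exp ((1:ℝ)/4) - 1)
            = (-(9/4) * ((max d (G.degree v) : ℕ) : ℝ)
              + 7 * ((((Nu v).card : ℕ) : ℝ) * (Real.exp ((1:ℝ)/4) - 1)))
                * (Real.sqrt L / R) := by ring
          _ ≤ (-(1/16) * n) * (Real.sqrt L / R) := step3
          _ = -(Real.sqrt L * n14)/16 := by rw [← hns]; ring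
      calc Ex p (bb (Sum.inr v))
          ≤ Real.exp (-(1/4) * cap v + ((Nu v).card : ℝ) * p * (Real.exp ((1:ℝ)/4) - 1)) := hch
        _ ≤ Real.exp (-(Real.sqrt L * n14)/16) := Real.exp_le_exp.2 hexpo
        _ ≤ q0 := hq0B
        _ ≤ x * (1-x)^Δ := hq0x
  -- dependency degree
  have hBad : ∀ a : V, (Finset.univ.filter
      (fun b' : V => ¬ Disjoint (Nu a) (Nu b'))).card ≤ d^6 := by
    intro a
    have hsub : Finset.univ.filter (fun b' : V => ¬ Disjoint (Nu a) (Nu b'))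
        ⊆ (G.neighborFinset a).biUnion (fun u => G.neighborFinset u) := by
      intro b' hb'
      rw [Finset.mem_filter] at hb'
      obtain ⟨u, hu1, hu2⟩ := Finset.not_disjoint_iff.1 hb'.2
      rw [hNudef, Finset.mem_filter] at hu1 hu2
      rw [Finset.mem_biUnion]
      refine ⟨u, ?_, ?_⟩
      · rw [SimpleGraph.mem_neighborFinset]
        exact hu1.2
      · rw [SimpleGraph.mem_neighborFinset]
        exact hu2.2.symm
    have h1 := le_trans (Finset.card_le_card hsub) (Finset.card_biUnion_le)
    by_cases hda : G.degree a ≤ d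
    · calc (Finset.univ.filter (fun b' : V => ¬ Disjoint (Nu a) (Nu b'))).card
          ≤ ∑ u ∈ G.neighborFinset a, (G.neighborFinset u).card := h1
        _ ≤ ∑ _u ∈ G.neighborFinset a, d^5 := by
            apply Finset.sum_le_sum
            intro u _
            rw [G.card_neighborFinset_eq_degree]
            exact hdeg u
        _ = G.degree a * d^5 := by
            rw [Finset.sum_const, smul_eq_mul, G.card_neighborFinset_eq_degree]
        _ ≤ d * d^5 := Nat.mul_le_mul_right _ hda
        _ = d^6 := by ring
    · push_neg at hda
      calc (Finset.univ.filter (fun b' : V => ¬ Disjoint (Nu a) (Nu b'))).card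
          ≤ ∑ u ∈ G.neighborFinset a, (G.neighborFinset u).card := h1
        _ ≤ ∑ _u ∈ G.neighborFinset a, d := by
            apply Finset.sum_le_sum
            intro u hu
            rw [G.card_neighborFinset_eq_degree]
            by_contra hc
            push_neg at hc
            have hadj : G.Adj a u := by
              rw [SimpleGraph.mem_neighborFinset] at hu
              exact hu
            exact hind a u hda hc hadj
        _ = G.degree a * d := by
            rw [Finset.sum_const, smul_eq_mul, G.card_neighborFinset_eq_degree]
        _ ≤ d^5 * d := Nat.mul_le_mul_right _ (hdeg a)
        _ = d^6 := by ring
  have hΓ : ∀ i ∈ I, (I.filter fun j => ¬ Disjoint (vbl i) (vbl j)).card ≤ Δ := by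
    intro i hi
    set a : V := match i with | Sum.inl t => t | Sum.inr v => v with hadef
    have hvbli : vbl i = Nu a := by
      rcases i with t | v <;> rfl
    set Bad : Finset V := Finset.univ.filter (fun b' : V => ¬ Disjoint (Nu a) (Nu b'))
      with hBaddef
    have hsub : I.filter (fun j => ¬ Disjoint (vbl i) (vbl j)) ⊆ Bad.disjSum Bad := by
      rintro (t | v) hj
      · rw [Finset.mem_filter] at hj
        rw [Finset.inl_mem_disjSum, hBaddef, Finset.mem_filter]
        refine ⟨Finset.mem_univ t, ?_⟩
        rw [← hvbli]
        exact hj.2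
      · rw [Finset.mem_filter] at hj
        rw [Finset.inr_mem_disjSum, hBaddef, Finset.mem_filter]
        refine ⟨Finset.mem_univ v, ?_⟩
        rw [← hvbli]
        exact hj.2
    calc (I.filter fun j => ¬ Disjoint (vbl i) (vbl j)).card
        ≤ (Bad.disjSum Bad).card := Finset.card_le_card hsub
      _ = Bad.card + Bad.card := Finset.card_disjSum _ _
      _ ≤ d^6 + d^6 := Nat.add_le_add (hBad a) (hBad a)
      _ = Δ := by rw [hΔdef]; ring
  -- apply the local lemma
  obtain ⟨S, hS⟩ := lll_exists hp0 hp1 hx0 hx1 hval hdep hq hΓ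
  refine ⟨S ∩ U, Finset.inter_subset_right, ?_, ?_⟩
  · intro t ht
    have hbt := hS (Sum.inl t) (by rw [hIdef]; exact Finset.inl_mem_disjSum.2 ht)
    have hne : ∃ u ∈ Nu t, u ∈ S := by
      by_contra hc
      push_neg at hc
      have : ∏ u ∈ Nu t, (1 - chi u S) = 1 := by
        apply Finset.prod_eq_one
        intro u hu
        unfold chi
        rw [if_neg (hc u hu)]
        ring
      rw [hbbdef] at hbt
      simp only at hbt
      rw [this] at hbt
      norm_num at hbt
    obtain ⟨u, hu, huS⟩ := hne
    rw [hNudef, Finset.mem_filter] at hu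
    exact ⟨u, Finset.mem_inter.2 ⟨huS, hu.1⟩, hu.2⟩
  · intro v
    have hbv := hS (Sum.inr v) (by rw [hIdef]; exact Finset.inr_mem_disjSum.2 (Finset.mem_univ v))
    have hle : (((S ∩ Nu v).card : ℕ) : ℝ) ≤ cap v := by
      by_contra hc
      push_neg at hc
      rw [hbbdef] at hbv
      simp only at hbv
      rw [if_pos hc] at hbv
      norm_num at hbv
    have heq : (S ∩ U).filter (G.Adj v) = S ∩ Nu v := by
      ext u
      rw [hNudef]
      simp only [Finset.mem_filter, Finset.mem_inter]
      tauto
    rw [heq]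
    calc (((S ∩ Nu v).card : ℕ) : ℝ) ≤ cap v := hle
      _ = ((max d (G.degree v) : ℕ) : ℝ) * 9 * Real.sqrt L / R := by rw [hcapdef]
end
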